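/- arXiv:1904.03168 — 2 statements merged into one kernel-verified Lean document; each statement's English description precedes it below -/
import Mathlib

section
/- For every a ≥ 0: (i) almost surely, on the event {T_a^{(H)} < ∞} one has S_{ℓ_{T_a^{(H)}}} = T_a^{(H)} (i.e. the graph of T_a^{(H)} is contained in the regeneration set R = {t ≥ 0 : S_{ℓ_t} = t}); and (ii) almost surely T_a^{(H)} = inf{t > 0 : X_{ℓ_t} − H_{S_{ℓ_t}} > a}, as elements of [0,∞]. -/
open MeasureTheory ProbabilityTheory Filter Set
open scoped ENNReal NNReal Topology

noncomputable section

/-- A Lévy process with values in `E`: starts at `0` a.s., a.s. càdlàg sample paths on `[0,∞)`,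
independent and stationary increments. -/
structure IsLevyProcess {Ω E : Type*} [MeasurableSpace Ω] [MeasurableSpace E]
    [TopologicalSpace E] [AddCommGroup E] (P : MeasureTheory.Measure Ω) (X : ℝ → Ω → E) :
    Prop where
  measurable : ∀ t : ℝ, Measurable (X t)
  init : ∀ᵐ ω ∂P, X 0 ω = (0 : E)
  right_cont : ∀ᵐ ω ∂P, ∀ t : ℝ, 0 ≤ t → ContinuousWithinAt (fun s => X s ω) (Set.Ici t) t
  left_lim : ∀ᵐ ω ∂P, ∀ t : ℝ, 0 < t →
    ∃ l : E, Filter.Tendsto (fun s => X s ω) (nhdsWithin t (Set.Iio t)) (nhds l)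
  indep_increments : ∀ (n : ℕ) (t : Fin (n + 1) → ℝ), 0 ≤ t 0 → Monotone t →
    iIndepFun
      (fun i : Fin n => fun ω => X (t i.succ) ω - X (t i.castSucc) ω) P
  stat_increments : ∀ s t : ℝ, 0 ≤ s → 0 ≤ t →
    P.map (fun ω => X (t + s) ω - X t ω) = P.map (X s)

/-- A subordinator: a real Lévy process with a.s. non-decreasing sample paths on `[0,∞)`. -/
def IsSubordinator {Ω : Type*} [MeasurableSpace Ω] (P : MeasureTheory.Measure Ω)
    (S : ℝ → Ω → ℝ) : Prop :=
  IsLevyProcess P S ∧ ∀ᵐ ω ∂P, MonotoneOn (fun t => S t ω) (Set.Ici 0)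

/-- A subordinator with a.s. strictly increasing sample paths on `[0,∞)`. -/
def IsStrictSubordinator {Ω : Type*} [MeasurableSpace Ω] (P : MeasureTheory.Measure Ω)
    (S : ℝ → Ω → ℝ) : Prop :=
  IsLevyProcess P S ∧ ∀ᵐ ω ∂P, StrictMonoOn (fun t => S t ω) (Set.Ici 0)

/-- The three processes `X`, `S`, `H` are mutually independent (as processes). -/
def IndepProc3 {Ω : Type*} [MeasurableSpace Ω] (P : MeasureTheory.Measure Ω)
    (X S H : ℝ → Ω → ℝ) : Prop :=
  iIndepFun
    (![fun ω t => X t ω, fun ω t => S t ω, fun ω t => H t ω] : Fin 3 → Ω → (ℝ → ℝ)) P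

/-- Two processes are independent. -/
def IndepProc2 {Ω : Type*} [MeasurableSpace Ω] (P : MeasureTheory.Measure Ω)
    (X S : ℝ → Ω → ℝ) : Prop :=
  IndepFun (fun ω t => X t ω) (fun ω t => S t ω) P

/-- `ℓ_t = inf { s > 0 : S_s > t }`, the right-continuous inverse of `S`. -/
def invS {Ω : Type*} (S : ℝ → Ω → ℝ) (t : ℝ) (ω : Ω) : ℝ :=
  sInf {s : ℝ | 0 < s ∧ t < S s ω}

/-- The time-changed process `𝕏_t = X_{ℓ_t}`. -/
def subX {Ω : Type*} (X S : ℝ → Ω → ℝ) (t : ℝ) (ω : Ω) : ℝ :=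
  X (invS S t ω) ω

/-- `inf { t > 0 : property t holds }`, valued in `[0,∞]` with `inf ∅ = ∞`. -/
def passageTime {Ω : Type*} (Y : Ω → ℝ → Prop) (ω : Ω) : ℝ≥0∞ :=
  sInf (ENNReal.ofReal '' {t : ℝ | 0 < t ∧ Y ω t})

/-- `T_a^{(H)} = inf { t > 0 : 𝕏_t > a + H_t }`. -/
def TH {Ω : Type*} (X S H : ℝ → Ω → ℝ) (a : ℝ) (ω : Ω) : ℝ≥0∞ :=
  passageTime (fun ω t => a + H t ω < subX X S t ω) ω

end

noncomputable section
open scoped Classical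
namespace St4


/-- left dyadic approximation: a dyadic point in `[t - 1/(m+1), t)`. -/
def lapx (t : ℝ) (m : ℕ) : ℝ := ⌈(t - 1/(m+1)) * 2^(m+1)⌉ / 2^(m+1)

/-- right dyadic approximation: a dyadic point in `[t, t + 2⁻ᵐ)`. -/
def rapx (t : ℝ) (m : ℕ) : ℝ := ⌈t * 2^m⌉ / 2^m

lemma measurable_int_cast_local : Measurable (fun k : ℤ => (k : ℝ)) := measurable_from_top

lemma lapx_ge (t : ℝ) (m : ℕ) : t - 1/(m+1) ≤ lapx t m := by
  rw [lapx, le_div_iff₀ (by positivity)]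
  exact Int.le_ceil _

lemma lapx_lt (t : ℝ) (m : ℕ) : lapx t m < t := by
  have h2 : ((m:ℝ)+1) < 2^(m+1) := by
    have := Nat.lt_two_pow_self (n := m+1)
    have h' : ((m+1 : ℕ) : ℝ) < ((2^(m+1) : ℕ) : ℝ) := by exact_mod_cast this
    simpa using h'
  have hc : (0:ℝ) < 2^(m+1) := by positivity
  rw [lapx, div_lt_iff₀ hc]
  have := Int.ceil_lt_add_one ((t - 1/(m+1)) * 2^(m+1))
  have h1 : (t - 1/(m+1)) * 2^(m+1) + 1 ≤ t * 2^(m+1) := by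
    have hm : (0:ℝ) < (m:ℝ)+1 := by positivity
    have : 1/((m:ℝ)+1) * 2^(m+1) ≥ 1 := by
      rw [div_mul_eq_mul_div, one_mul, ge_iff_le, le_div_iff₀ hm, one_mul]
      exact h2.le
    nlinarith
  linarith

lemma rapx_ge (t : ℝ) (m : ℕ) : t ≤ rapx t m := by
  rw [rapx, le_div_iff₀ (by positivity)]
  exact Int.le_ceil _

lemma rapx_lt (t : ℝ) (m : ℕ) : rapx t m < t + (2^m)⁻¹ := by
  have hc : (0:ℝ) < 2^m := by positivity
  rw [rapx, div_lt_iff₀ hc]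
  have := Int.ceil_lt_add_one (t * 2^m)
  have : (t + (2^m)⁻¹) * 2^m = t * 2^m + 1 := by field_simp
  nlinarith [Int.ceil_lt_add_one (t * 2^m)]

lemma tendsto_lapx (t : ℝ) : Tendsto (lapx t) atTop (𝓝[Iio t] t) := by
  rw [tendsto_nhdsWithin_iff]
  constructor
  · apply tendsto_of_tendsto_of_tendsto_of_le_of_le (g := fun m : ℕ => t - 1/(m+1))
      (h := fun _ => t)
    · have : Tendsto (fun m : ℕ => 1/((m:ℝ)+1)) atTop (𝓝 0) := tendsto_one_div_add_atTop_nhds_zero_nat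
      simpa using (tendsto_const_nhds (x := t)).sub this
    · exact tendsto_const_nhds
    · exact fun m => lapx_ge t m
    · exact fun m => (lapx_lt t m).le
  · exact Eventually.of_forall (fun m => lapx_lt t m)

lemma tendsto_rapx (t : ℝ) : Tendsto (rapx t) atTop (𝓝[Ici t] t) := by
  rw [tendsto_nhdsWithin_iff]
  constructor
  · apply tendsto_of_tendsto_of_tendsto_of_le_of_le (g := fun _ : ℕ => t)
      (h := fun m : ℕ => t + (2^m)⁻¹)
    · exact tendsto_const_nhds
    · have : Tendsto (fun m : ℕ => ((2:ℝ)^m)⁻¹) atTop (𝓝 0) := by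
        exact tendsto_inv_atTop_zero.comp (tendsto_pow_atTop_atTop_of_one_lt (by norm_num : (1:ℝ) < 2))
      simpa using (tendsto_const_nhds (x := t)).add this
    · exact fun m => rapx_ge t m
    · exact fun m => (rapx_lt t m).le
  · exact Eventually.of_forall (fun m => rapx_ge t m)

lemma countable_range_lapx (m : ℕ) : (Set.range (fun t => lapx t m)).Countable := by
  apply Set.Countable.mono _ (Set.countable_range (fun k : ℤ => (k:ℝ)/2^(m+1)))
  rintro x ⟨t, rfl⟩
  exact ⟨⌈(t - 1/(m+1)) * 2^(m+1)⌉, rfl⟩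

lemma countable_range_rapx (m : ℕ) : (Set.range (fun t => rapx t m)).Countable := by
  apply Set.Countable.mono _ (Set.countable_range (fun k : ℤ => (k:ℝ)/2^m))
  rintro x ⟨t, rfl⟩
  exact ⟨⌈t * 2^m⌉, rfl⟩

lemma measurable_lapx (m : ℕ) : Measurable (fun t => lapx t m) := by
  apply Measurable.div _ measurable_const
  exact measurable_int_cast_local.comp (Int.measurable_ceil.comp (by measurability))

lemma measurable_rapx (m : ℕ) : Measurable (fun t => rapx t m) := by
  apply Measurable.div _ measurable_const
  exact measurable_int_cast_local.comp (Int.measurable_ceil.comp (by measurability))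

/-- composing an evaluation-type map with a countable-range measurable function. -/
lemma meas_comp_cnt {α β γ : Type*} [MeasurableSpace α] [MeasurableSpace β] [MeasurableSpace γ]
    [MeasurableSingletonClass β]
    {V : α → β} (hV : Measurable V) (hc : (Set.range V).Countable)
    {F : α → β → γ} (hF : ∀ b, Measurable (fun a => F a b)) :
    Measurable (fun a => F a (V a)) := by
  intro s hs
  have : (fun a => F a (V a)) ⁻¹' s = ⋃ b ∈ Set.range V, ({a | V a = b} ∩ {a | F a b ∈ s}) := by
    ext a
    simp only [Set.mem_preimage, Set.mem_iUnion, Set.mem_inter_iff, Set.mem_setOf_eq]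
    constructor
    · intro h; exact ⟨V a, ⟨a, rfl⟩, rfl, h⟩
    · rintro ⟨b, _, rfl, h⟩; exact h
  rw [this]
  exact MeasurableSet.biUnion hc
    (fun b _ => (hV (measurableSet_singleton b)).inter (hF b hs))

/-- the "bad" event at time `t`: the dyadic left and right approximations of `f` around `t`
do not converge to the same value. -/
def bad (t : ℝ) (f : ℝ → ℝ) : Prop :=
  ¬ Tendsto (fun m => f (lapx t m) - f (rapx t m)) atTop (𝓝 0)

def badSet : Set (ℝ × (ℝ → ℝ)) := {p | 0 < p.1 ∧ bad p.1 p.2}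

lemma measurable_eval_lapx (m : ℕ) :
    Measurable (fun p : ℝ × (ℝ → ℝ) => p.2 (lapx p.1 m)) := by
  apply meas_comp_cnt (V := fun p : ℝ × (ℝ → ℝ) => lapx p.1 m)
    ((measurable_lapx m).comp measurable_fst)
  · exact (countable_range_lapx m).mono (by rintro x ⟨p, rfl⟩; exact ⟨p.1, rfl⟩)
  · exact fun b => (measurable_pi_apply b).comp measurable_snd

lemma measurable_eval_rapx (m : ℕ) :
    Measurable (fun p : ℝ × (ℝ → ℝ) => p.2 (rapx p.1 m)) := by
  apply meas_comp_cnt (V := fun p : ℝ × (ℝ → ℝ) => rapx p.1 m)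
    ((measurable_rapx m).comp measurable_fst)
  · exact (countable_range_rapx m).mono (by rintro x ⟨p, rfl⟩; exact ⟨p.1, rfl⟩)
  · exact fun b => (measurable_pi_apply b).comp measurable_snd

lemma measurableSet_badSet : MeasurableSet badSet := by
  have h1 : MeasurableSet {p : ℝ × (ℝ → ℝ) | 0 < p.1} :=
    measurable_fst measurableSet_Ioi
  have h2 : MeasurableSet {p : ℝ × (ℝ → ℝ) |
      Tendsto (fun m => p.2 (lapx p.1 m) - p.2 (rapx p.1 m)) atTop (𝓝 0)} :=
    measurableSet_tendsto (𝓝 0) (fun m => (measurable_eval_lapx m).sub (measurable_eval_rapx m))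
  exact h1.inter h2.compl



lemma div_lt_div_same_pos {x y c : ℝ} (h : x < y) (hc : 0 < c) : x/c < y/c := by
  rw [div_lt_div_iff₀ hc hc]; nlinarith

/-- `jmp c δ u g` : `g` has a jump of size at least `δ` at `u`, seen from points `≥ c`. -/
def jmp (c δ u : ℝ) (g : ℝ → ℝ) : Prop :=
  ∀ x y : ℝ, c ≤ x → x < u → u < y → δ ≤ g y - g x

/-- maximal increment of `g` over dyadic windows of level `n` touching `(a,b)`,
with left ends clamped at `c`. -/
def Mn (c a b : ℝ) (g : ℝ → ℝ) (n : ℕ) : ℝ≥0∞ :=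
  ⨆ k : ℕ, if ((k:ℝ)/2^n < b ∧ a < ((k:ℝ)+2)/2^n) then
    ENNReal.ofReal (g (((k:ℝ)+2)/2^n) - g (max ((k:ℝ)/2^n) c)) else 0

/-- the limiting maximal local increment of `g` on `[a,b]`. -/
def Mf (c a b : ℝ) (g : ℝ → ℝ) : ℝ≥0∞ := ⨅ n : ℕ, Mn c a b g n

lemma measurable_Mf (c : ℝ) :
    Measurable (fun p : (ℝ × ℝ) × (ℝ → ℝ) => Mf c p.1.1 p.1.2 p.2) := by
  apply Measurable.iInf
  intro n
  apply Measurable.iSup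
  intro k
  apply Measurable.ite
  · have : {p : (ℝ × ℝ) × (ℝ → ℝ) | (k:ℝ)/2^n < p.1.2 ∧ p.1.1 < ((k:ℝ)+2)/2^n}
        = ((fun p : (ℝ × ℝ) × (ℝ → ℝ) => p.1.2) ⁻¹' (Set.Ioi ((k:ℝ)/2^n))) ∩
          ((fun p : (ℝ × ℝ) × (ℝ → ℝ) => p.1.1) ⁻¹' (Set.Iio (((k:ℝ)+2)/2^n))) := rfl
    rw [this]
    exact ((measurable_snd.comp measurable_fst) measurableSet_Ioi).inter
      ((measurable_fst.comp measurable_fst) measurableSet_Iio)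
  · exact ENNReal.measurable_ofReal.comp
      (((measurable_pi_apply _).comp measurable_snd).sub
        ((measurable_pi_apply _).comp measurable_snd))
  · exact measurable_const

/-- bracketing: a `δ`-jump inside `[a,b]` forces `Mf ≥ δ`. -/
lemma Mf_of_jmp {g : ℝ → ℝ} {c δ u a b : ℝ}
    (hcu : c < u) (hu : 0 < u) (hau : a ≤ u) (hub : u ≤ b)
    (hj : jmp c δ u g) : ENNReal.ofReal δ ≤ Mf c a b g := by
  refine le_iInf (fun n => ?_)
  have h2n : (0:ℝ) < 2^n := by positivity
  set K : ℤ := ⌈u * 2^n⌉ - 1 with hK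
  have hK1 : (K:ℝ) < u * 2^n := by
    rw [hK]; push_cast; linarith [Int.ceil_lt_add_one (u * 2^n)]
  have hK2 : u * 2^n ≤ (K:ℝ) + 1 := by
    rw [hK]; push_cast; linarith [Int.le_ceil (u * 2^n)]
  have hK0 : 0 ≤ K := by
    rw [hK, sub_nonneg]
    exact Int.one_le_ceil_iff.2 (by positivity)
  set k : ℕ := K.toNat with hk
  have hkK : (k:ℝ) = (K:ℝ) := by
    rw [hk]; exact_mod_cast congrArg Int.cast (Int.toNat_of_nonneg hK0)
  have hklt : (k:ℝ)/2^n < u := by rw [hkK, div_lt_iff₀ h2n]; exact hK1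
  have hkge : u ≤ ((k:ℝ)+1)/2^n := by rw [hkK, le_div_iff₀ h2n]; exact hK2
  have hky : u < ((k:ℝ)+2)/2^n :=
    lt_of_le_of_lt hkge (div_lt_div_same_pos (by linarith) h2n)
  have hcond : ((k:ℝ)/2^n < b ∧ a < ((k:ℝ)+2)/2^n) :=
    ⟨lt_of_lt_of_le hklt hub, lt_of_le_of_lt hau hky⟩
  refine le_trans ?_ (le_iSup _ k)
  rw [if_pos hcond]
  exact ENNReal.ofReal_le_ofReal
    (hj (max ((k:ℝ)/2^n) c) (((k:ℝ)+2)/2^n) (le_max_right _ _) (max_lt hklt hcu) hky)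

/-- existence: if `Mf ≥ δ > 0` then there is a `δ`-jump point in `[a,b]`. -/
lemma exists_jmp_of_Mf {g : ℝ → ℝ} (hg : MonotoneOn g (Ici 0)) {c δ a b : ℝ}
    (hc : 0 ≤ c) (ha : 0 ≤ a) (hab : a ≤ b) (hδ : 0 < δ)
    (hM : ENNReal.ofReal δ ≤ Mf c a b g) : ∃ u ∈ Icc a b, jmp c δ u g := by
  have h2n : ∀ n : ℕ, (0:ℝ) < 2^n := fun n => by positivity
  have hpick : ∀ n : ℕ, ∃ k : ℕ, ((k:ℝ)/2^n < b ∧ a < ((k:ℝ)+2)/2^n) ∧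
      δ - 1/(n+1) < g (((k:ℝ)+2)/2^n) - g (max ((k:ℝ)/2^n) c) := by
    intro n
    have hMn : ENNReal.ofReal δ ≤ Mn c a b g n := le_trans hM (iInf_le _ n)
    have hlt : ENNReal.ofReal (δ - 1/(n+1)) < Mn c a b g n := by
      refine lt_of_lt_of_le ?_ hMn
      have : δ - 1/((n:ℝ)+1) < δ := by
        have : (0:ℝ) < 1/((n:ℝ)+1) := by positivity
        linarith
      exact (ENNReal.ofReal_lt_ofReal_iff hδ).2 this
    rw [Mn, lt_iSup_iff] at hlt
    obtain ⟨k, hk⟩ := hlt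
    by_cases hcond : ((k:ℝ)/2^n < b ∧ a < ((k:ℝ)+2)/2^n)
    · rw [if_pos hcond] at hk
      refine ⟨k, hcond, ?_⟩
      by_cases hsign : 0 ≤ δ - 1/((n:ℝ)+1)
      · exact (ENNReal.ofReal_lt_ofReal_iff_of_nonneg hsign).1 hk
      · push_neg at hsign
        have : 0 < g (((k:ℝ)+2)/2^n) - g (max ((k:ℝ)/2^n) c) := by
          by_contra hle
          push_neg at hle
          rw [ENNReal.ofReal_of_nonpos hle] at hk
          exact (not_lt_bot hk)
        linarith
    · rw [if_neg hcond] at hk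
      exact absurd hk (by simp)
  choose ks hks using hpick
  -- clamped window positions
  set v : ℕ → ℝ := fun n => ((ks n : ℝ))/2^n with hv
  set p : ℕ → ℝ := fun n => min b (max a (v n)) with hp
  have hpIcc : ∀ n, p n ∈ Icc a b := fun n => by
    constructor
    · exact le_min hab (le_max_left _ _)
    · exact min_le_left _ _
  have hpv : ∀ n, |p n - v n| ≤ 2/2^n := by
    intro n
    have hvb : v n < b := (hks n).1.1
    have h2 : a < v n + 2/2^n := by
      have := (hks n).1.2
      have : a < ((ks n : ℝ)+2)/2^n := this
      rw [add_div] at this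
      exact this
    by_cases hav : a ≤ v n
    · have : p n = v n := by rw [hp]; simp [max_eq_right hav, min_eq_right hvb.le]
      rw [this]; simp; positivity
    · push_neg at hav
      have hpa : p n = a := by
        rw [hp]; simp only [max_eq_left hav.le, min_eq_right hab]
      rw [hpa, abs_of_pos (by linarith)]
      linarith
  -- Bolzano–Weierstrass
  obtain ⟨u, huIcc, φ, hφmono, hφtend⟩ :=
    tendsto_subseq_of_bounded (Metric.isBounded_Icc a b) hpIcc
  rw [IsClosed.closure_eq isClosed_Icc] at huIcc
  refine ⟨u, huIcc, ?_⟩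
  intro x y hcx hxu huy
  -- v ∘ φ and window right ends tend to u
  have h2pow : Tendsto (fun n : ℕ => 2/(2:ℝ)^n) atTop (𝓝 0) := by
    have : Tendsto (fun n : ℕ => ((2:ℝ)^n)⁻¹) atTop (𝓝 0) := by
      exact tendsto_inv_atTop_zero.comp
        (tendsto_pow_atTop_atTop_of_one_lt (by norm_num : (1:ℝ) < 2))
    simpa [div_eq_mul_inv] using this.const_mul 2
  have hvφ : Tendsto (fun j => v (φ j)) atTop (𝓝 u) := by
    have hd : Tendsto (fun j => p (φ j) - v (φ j)) atTop (𝓝 0) := by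
      apply squeeze_zero_norm (fun j => ?_) (h2pow.comp hφmono.tendsto_atTop)
      simpa using hpv (φ j)
    simpa using hφtend.sub hd
  have hyφ : Tendsto (fun j => v (φ j) + 2/2^(φ j)) atTop (𝓝 u) := by
    simpa using hvφ.add (h2pow.comp hφmono.tendsto_atTop)
  -- eventually the window is inside (x,y)
  have hev : ∀ᶠ j : ℕ in atTop, δ - 1/((j:ℝ)+1) ≤ g y - g x := by
    have hev1 : ∀ᶠ j in atTop, x < v (φ j) := hvφ.eventually (eventually_gt_nhds hxu)
    have hev2 : ∀ᶠ j in atTop, v (φ j) + 2/2^(φ j) < y := hyφ.eventually (eventually_lt_nhds huy)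
    filter_upwards [hev1, hev2] with j h1 h2
    have hkey := (hks (φ j)).2
    have hxv : (0:ℝ) ≤ x := le_trans hc hcx
    have hwin : g (((ks (φ j) : ℝ)+2)/2^(φ j)) - g (max (v (φ j)) c) ≤ g y - g x := by
      have hy' : ((ks (φ j) : ℝ)+2)/2^(φ j) = v (φ j) + 2/2^(φ j) := by
        rw [hv, add_div]
      have hy0 : (0:ℝ) ≤ y := by
        have : (0:ℝ) ≤ ((ks (φ j) : ℝ)+2)/2^(φ j) := by positivity
        rw [hy'] at this
        linarith
      have e1 : g (((ks (φ j) : ℝ)+2)/2^(φ j)) ≤ g y := by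
        apply hg (Set.mem_Ici.2 (by positivity)) (Set.mem_Ici.2 hy0)
        rw [hy']; exact h2.le
      have e2 : g x ≤ g (max (v (φ j)) c) := by
        apply hg (Set.mem_Ici.2 hxv) (Set.mem_Ici.2 (le_trans hxv (le_max_of_le_left h1.le)))
        exact le_max_of_le_left h1.le
      linarith
    have hδj : δ - 1/((φ j : ℝ)+1) ≤ g y - g x := le_trans hkey.le hwin
    refine le_trans ?_ hδj
    have hφj : (j:ℝ) ≤ (φ j : ℝ) := by exact_mod_cast hφmono.le_apply
    have : 1/((φ j:ℝ)+1) ≤ 1/((j:ℝ)+1) := by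
      apply one_div_le_one_div_of_le (by positivity) (by linarith)
    linarith
  have htend : Tendsto (fun j : ℕ => δ - 1/((j:ℝ)+1)) atTop (𝓝 δ) := by
    simpa using (tendsto_const_nhds (x := δ)).sub tendsto_one_div_add_atTop_nhds_zero_nat
  exact le_of_tendsto htend hev

/-- bisection search for the (unique) `δ`-jump of `g` in `[q,r]`. -/
def bis (c δ q r : ℝ) (g : ℝ → ℝ) : ℕ → ℝ × ℝ
  | 0 => (q, r)
  | n+1 =>
    let p := bis c δ q r g n
    if ENNReal.ofReal δ ≤ Mf c p.1 ((p.1+p.2)/2) g then (p.1, (p.1+p.2)/2)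
    else ((p.1+p.2)/2, p.2)

/-- the selected jump location. -/
def sel (c δ q r : ℝ) (g : ℝ → ℝ) : ℝ :=
  q + (⨆ n, ENNReal.ofReal ((bis c δ q r g n).1 - q)).toReal

section bisection

variable {c δ q r : ℝ} {g : ℝ → ℝ}

lemma bis_le (hqr : q ≤ r) : ∀ n, (bis c δ q r g n).1 ≤ (bis c δ q r g n).2 := by
  intro n
  induction n with
  | zero => exact hqr
  | succ n ih =>
    rw [bis]
    by_cases h : ENNReal.ofReal δ ≤ Mf c (bis c δ q r g n).1
        (((bis c δ q r g n).1 + (bis c δ q r g n).2)/2) g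
    · simp only [if_pos h]; linarith
    · simp only [if_neg h]; linarith

lemma bis_mono1 (hqr : q ≤ r) : Monotone (fun n => (bis c δ q r g n).1) := by
  apply monotone_nat_of_le_succ
  intro n
  have := bis_le (c := c) (δ := δ) (g := g) hqr n
  rw [bis]
  by_cases h : ENNReal.ofReal δ ≤ Mf c (bis c δ q r g n).1
      (((bis c δ q r g n).1 + (bis c δ q r g n).2)/2) g
  · simp only [if_pos h]; linarith
  · simp only [if_neg h]; linarith

lemma bis_anti2 (hqr : q ≤ r) : Antitone (fun n => (bis c δ q r g n).2) := by
  apply antitone_nat_of_succ_le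
  intro n
  have := bis_le (c := c) (δ := δ) (g := g) hqr n
  rw [bis]
  by_cases h : ENNReal.ofReal δ ≤ Mf c (bis c δ q r g n).1
      (((bis c δ q r g n).1 + (bis c δ q r g n).2)/2) g
  · simp only [if_pos h]; linarith
  · simp only [if_neg h]; linarith

lemma bis_ge_q (hqr : q ≤ r) : ∀ n, q ≤ (bis c δ q r g n).1 := by
  intro n
  have : (bis c δ q r g 0).1 ≤ (bis c δ q r g n).1 := bis_mono1 hqr (Nat.zero_le n)
  simpa [bis] using this

lemma bis_le_r (hqr : q ≤ r) : ∀ n, (bis c δ q r g n).2 ≤ r := by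
  intro n
  have : (bis c δ q r g n).2 ≤ (bis c δ q r g 0).2 := bis_anti2 hqr (Nat.zero_le n)
  simpa [bis] using this

lemma bis_diff (hqr : q ≤ r) :
    ∀ n, (bis c δ q r g n).2 - (bis c δ q r g n).1 = (r - q)/2^n := by
  intro n
  induction n with
  | zero => simp [bis]
  | succ n ih =>
    rw [bis]
    by_cases h : ENNReal.ofReal δ ≤ Mf c (bis c δ q r g n).1
        (((bis c δ q r g n).1 + (bis c δ q r g n).2)/2) g
    · simp only [if_pos h]
      rw [pow_succ]
      field_simp at ih ⊢
      linarith
    · simp only [if_neg h]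
      rw [pow_succ]
      field_simp at ih ⊢
      linarith

lemma tendsto_bis1 (hqr : q ≤ r) :
    Tendsto (fun n => (bis c δ q r g n).1) atTop (𝓝 (sel c δ q r g)) ∧
    sel c δ q r g ∈ Icc q r ∧
    (∀ n, (bis c δ q r g n).1 ≤ sel c δ q r g ∧ sel c δ q r g ≤ (bis c δ q r g n).2) ∧
    Tendsto (fun n => (bis c δ q r g n).2) atTop (𝓝 (sel c δ q r g)) := by
  set t : ℕ → ℝ := fun n => (bis c δ q r g n).1 with ht
  set s : ℕ → ℝ := fun n => (bis c δ q r g n).2 with hs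
  have hbdd : BddAbove (Set.range t) := by
    refine ⟨r, ?_⟩
    rintro x ⟨n, rfl⟩
    exact le_trans (bis_le hqr n) (bis_le_r hqr n)
  set L : ℝ := ⨆ n, t n with hL
  have htL : Tendsto t atTop (𝓝 L) := tendsto_atTop_ciSup (bis_mono1 hqr) hbdd
  have htle : ∀ n, t n ≤ L := fun n => le_ciSup hbdd n
  have hLs : ∀ n, L ≤ s n := by
    intro n
    refine ciSup_le (fun m => ?_)
    rcases le_total m n with h | h
    · exact le_trans (bis_mono1 hqr h) (bis_le hqr n)
    · exact le_trans (bis_le hqr m) (bis_anti2 hqr h)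
  have hselL : sel c δ q r g = L := by
    have hq0 : q ≤ L := le_trans (le_refl _) (by simpa [ht, bis] using htle 0)
    have hsup : (⨆ n, ENNReal.ofReal (t n - q)) = ENNReal.ofReal (L - q) := by
      apply le_antisymm
      · exact iSup_le (fun n => ENNReal.ofReal_le_ofReal (by linarith [htle n]))
      · have hof : Tendsto (fun n => ENNReal.ofReal (t n - q)) atTop
            (𝓝 (ENNReal.ofReal (L - q))) :=
          (ENNReal.continuous_ofReal.tendsto _).comp (htL.sub tendsto_const_nhds)
        exact le_of_tendsto hof (Eventually.of_forall (fun n => le_iSup (fun m => ENNReal.ofReal (t m - q)) n))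
      -- (order of bullets may need care)
    rw [sel, hsup, ENNReal.toReal_ofReal (by linarith)]
    ring
  rw [hselL]
  have hdiff : Tendsto (fun n => s n - t n) atTop (𝓝 0) := by
    have h2 : Tendsto (fun n : ℕ => (r - q)/2^n) atTop (𝓝 0) := by
      have : Tendsto (fun n : ℕ => ((2:ℝ)^n)⁻¹) atTop (𝓝 0) := by
        exact tendsto_inv_atTop_zero.comp
          (tendsto_pow_atTop_atTop_of_one_lt (by norm_num : (1:ℝ) < 2))
      simpa [div_eq_mul_inv] using this.const_mul (r - q)
    exact Tendsto.congr (fun n => (bis_diff hqr n).symm) h2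
  refine ⟨htL, ⟨?_, ?_⟩, fun n => ⟨htle n, hLs n⟩, ?_⟩
  · simpa [ht, bis] using htle 0
  · simpa [hs, bis] using hLs 0
  · simpa using htL.add hdiff

/-- the bisection invariant: `Mf ≥ δ` propagates along the bisection. -/
lemma bis_invariant (hg : MonotoneOn g (Ici 0)) (hqr : q ≤ r) (hq : 0 < q) (hcq : c < q)
    (hc : 0 ≤ c) (hδ : 0 < δ) (base : ENNReal.ofReal δ ≤ Mf c q r g) :
    ∀ n, ENNReal.ofReal δ ≤ Mf c (bis c δ q r g n).1 (bis c δ q r g n).2 g := by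
  intro n
  induction n with
  | zero => simpa [bis] using base
  | succ n ih =>
    have htq := bis_ge_q (c := c) (δ := δ) (g := g) hqr n
    have hts := bis_le (c := c) (δ := δ) (g := g) hqr n
    obtain ⟨u, huIcc, hujmp⟩ := exists_jmp_of_Mf hg hc (by linarith) hts hδ ih
    have hcu : c < u := lt_of_lt_of_le hcq (le_trans htq huIcc.1)
    have hu0 : 0 < u := lt_of_lt_of_le hq (le_trans htq huIcc.1)
    rw [bis]
    by_cases h : ENNReal.ofReal δ ≤ Mf c (bis c δ q r g n).1
        (((bis c δ q r g n).1 + (bis c δ q r g n).2)/2) g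
    · simp only [if_pos h]; exact h
    · simp only [if_neg h]
      have humid : ((bis c δ q r g n).1 + (bis c δ q r g n).2)/2 ≤ u := by
        by_contra hlt
        push_neg at hlt
        exact h (Mf_of_jmp hcu hu0 huIcc.1 hlt.le hujmp)
      exact Mf_of_jmp hcu hu0 humid huIcc.2 hujmp

/-- the selected point has the jump property, provided the invariant base case holds. -/
lemma sel_jmp (hg : MonotoneOn g (Ici 0)) (hqr : q ≤ r) (hq : 0 < q) (hcq : c < q)
    (hc : 0 ≤ c) (hδ : 0 < δ) (base : ENNReal.ofReal δ ≤ Mf c q r g) :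
    jmp c δ (sel c δ q r g) g := by
  obtain ⟨ht, _, hsel, hs⟩ := tendsto_bis1 (c := c) (δ := δ) (g := g) hqr
  intro x y hcx hxu huy
  have hev1 : ∀ᶠ n in atTop, x < (bis c δ q r g n).1 := ht.eventually (eventually_gt_nhds hxu)
  have hev2 : ∀ᶠ n in atTop, (bis c δ q r g n).2 < y := hs.eventually (eventually_lt_nhds huy)
  obtain ⟨n, h1, h2⟩ := (hev1.and hev2).exists
  have htq := bis_ge_q (c := c) (δ := δ) (g := g) hqr n
  have hts := bis_le (c := c) (δ := δ) (g := g) hqr n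
  obtain ⟨u', hu'Icc, hu'jmp⟩ := exists_jmp_of_Mf hg hc (by linarith)
    hts hδ (bis_invariant hg hqr hq hcq hc hδ base n)
  exact hu'jmp x y hcx (lt_of_lt_of_le h1 hu'Icc.1) (lt_of_le_of_lt hu'Icc.2 h2)

lemma measurable_bis (c δ q r : ℝ) (n : ℕ) :
    Measurable (fun g : ℝ → ℝ => bis c δ q r g n) := by
  induction n with
  | zero => exact measurable_const
  | succ n ih =>
    have h1 : Measurable (fun g : ℝ → ℝ => (bis c δ q r g n).1) := measurable_fst.comp ih
    have h2 : Measurable (fun g : ℝ → ℝ => (bis c δ q r g n).2) := measurable_snd.comp ih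
    have hmid : Measurable (fun g : ℝ → ℝ => ((bis c δ q r g n).1 + (bis c δ q r g n).2)/2) :=
      (h1.add h2).div_const 2
    have hcond : MeasurableSet {g : ℝ → ℝ | ENNReal.ofReal δ ≤ Mf c (bis c δ q r g n).1
        (((bis c δ q r g n).1 + (bis c δ q r g n).2)/2) g} := by
      have : (fun g : ℝ → ℝ => Mf c (bis c δ q r g n).1
          (((bis c δ q r g n).1 + (bis c δ q r g n).2)/2) g) =
          (fun p : (ℝ × ℝ) × (ℝ → ℝ) => Mf c p.1.1 p.1.2 p.2) ∘
          (fun g => (((bis c δ q r g n).1, ((bis c δ q r g n).1 + (bis c δ q r g n).2)/2), g)) :=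
        rfl
      have hm : Measurable (fun g : ℝ → ℝ => Mf c (bis c δ q r g n).1
          (((bis c δ q r g n).1 + (bis c δ q r g n).2)/2) g) := by
        rw [this]
        exact (measurable_Mf c).comp ((h1.prodMk hmid).prodMk measurable_id)
      exact hm measurableSet_Ici
    simp only [bis]
    exact Measurable.ite hcond (h1.prodMk hmid) (hmid.prodMk h2)

lemma measurable_sel (c δ q r : ℝ) : Measurable (fun g : ℝ → ℝ => sel c δ q r g) := by
  apply Measurable.const_add
  apply ENNReal.measurable_toReal.comp
  apply Measurable.iSup
  intro n
  exact ENNReal.measurable_ofReal.comp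
    ((measurable_fst.comp (measurable_bis c δ q r n)).sub measurable_const)

end bisection

/-- countable family of jump selectors. -/
def selQ (q r : ℚ) (i : ℕ) (g : ℝ → ℝ) : ℝ :=
  sel ((q:ℝ)/2) (1/((i:ℝ)+1)) (q:ℝ) (r:ℝ) g

/-- the left value of `g` at the selected point (via dyadic approximation). -/
def lvalQ (q r : ℚ) (i : ℕ) (g : ℝ → ℝ) : ℝ :=
  (Filter.liminf (fun m => ENNReal.ofReal (g (lapx (selQ q r i g) m))) atTop).toReal

lemma measurable_selQ (q r : ℚ) (i : ℕ) : Measurable (selQ q r i) :=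
  measurable_sel _ _ _ _

lemma measurable_lvalQ (q r : ℚ) (i : ℕ) : Measurable (lvalQ q r i) := by
  apply ENNReal.measurable_toReal.comp
  apply Measurable.liminf
  intro m
  apply ENNReal.measurable_ofReal.comp
  apply meas_comp_cnt (V := fun g : ℝ → ℝ => lapx (selQ q r i g) m)
    ((measurable_lapx m).comp (measurable_selQ q r i))
  · exact (countable_range_lapx m).mono (by rintro x ⟨g, rfl⟩; exact ⟨selQ q r i g, rfl⟩)
  · exact fun b => measurable_pi_apply b

lemma lvalQ_eq {q r : ℚ} {i : ℕ} {g : ℝ → ℝ} {u l : ℝ}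
    (hsel : selQ q r i g = u) (hl : Tendsto g (𝓝[Iio u] u) (𝓝 l)) (hl0 : 0 ≤ l) :
    lvalQ q r i g = l := by
  have h1 : Tendsto (fun m => g (lapx u m)) atTop (𝓝 l) := hl.comp (tendsto_lapx u)
  have h2 : Tendsto (fun m => ENNReal.ofReal (g (lapx u m))) atTop
      (𝓝 (ENNReal.ofReal l)) := (ENNReal.continuous_ofReal.tendsto _).comp h1
  rw [lvalQ, hsel, h2.liminf_eq, ENNReal.toReal_ofReal hl0]

/-- every jump point of a monotone càdlàg function is selected by some selector. -/
lemma coverage {g : ℝ → ℝ} (hmono : MonotoneOn g (Ici 0))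
    (hrc : ∀ t, 0 ≤ t → ContinuousWithinAt g (Ici t) t)
    (hll : ∀ t, 0 < t → ∃ l, Tendsto g (𝓝[Iio t] t) (𝓝 l))
    {u δ₀ : ℝ} (hu : 0 < u) (hδ₀ : 0 < δ₀) (hjump : jmp 0 δ₀ u g) :
    ∃ (q r : ℚ) (i : ℕ), selQ q r i g = u := by
  obtain ⟨i, hi⟩ := exists_nat_one_div_lt hδ₀
  set δ : ℝ := 1/((i:ℝ)+1) with hδdef
  have hδ : 0 < δ := by positivity
  have hδδ₀ : δ ≤ δ₀ := hi.le
  obtain ⟨l, hl⟩ := hll u hu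
  obtain ⟨η1, hη1pos, hη1⟩ := Metric.tendsto_nhdsWithin_nhds.1 hl (δ/4) (by positivity)
  obtain ⟨η2, hη2pos, hη2⟩ := Metric.tendsto_nhdsWithin_nhds.1
    ((hrc u hu.le).tendsto) (δ/4) (by positivity)
  obtain ⟨q, hq1, hq2⟩ := exists_rat_btwn (show max (u - η1) (u/2) < u by
    apply max_lt <;> linarith)
  obtain ⟨r, hr1, hr2⟩ := exists_rat_btwn (show u < u + η2 by linarith)
  have hq0 : 0 < (q:ℝ) := lt_of_le_of_lt (by linarith [le_max_right (u - η1) (u/2)] : (0:ℝ) ≤ max (u - η1) (u/2)) hq1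
  have hqη : u - η1 < (q:ℝ) := lt_of_le_of_lt (le_max_left _ _) hq1
  have hqu : (q:ℝ) < u := hq2
  have hur : u < (r:ℝ) := hr1
  have hqr : (q:ℝ) ≤ (r:ℝ) := by linarith
  refine ⟨q, r, i, ?_⟩
  -- base case of the invariant
  have hjmp_u : jmp ((q:ℝ)/2) δ u g := by
    intro x y hx hxu huy
    exact le_trans hδδ₀ (hjump x y (by linarith) hxu huy)
  have base : ENNReal.ofReal δ ≤ Mf ((q:ℝ)/2) (q:ℝ) (r:ℝ) g :=
    Mf_of_jmp (by linarith) hu hqu.le hur.le hjmp_u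
  have hself : jmp ((q:ℝ)/2) δ (selQ q r i g) g :=
    sel_jmp hmono hqr hq0 (by linarith) (by linarith) hδ base
  have hmem : selQ q r i g ∈ Icc (q:ℝ) (r:ℝ) :=
    (tendsto_bis1 hqr).2.1
  set w : ℝ := selQ q r i g with hw
  rcases lt_trichotomy w u with hlt | heq | hgt
  · exfalso
    -- w ∈ [q, u) ⊆ (u-η1, u): contradiction with smallness of oscillation on the left
    have hwq : (q:ℝ) ≤ w := hmem.1
    have hmax : max (u - η1) ((q:ℝ)/2) < w := by
      apply max_lt
      · linarith
      · linarith
    set x : ℝ := (max (u - η1) ((q:ℝ)/2) + w)/2 with hx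
    set y : ℝ := (w + u)/2 with hy
    have hxw : x < w := by rw [hx]; linarith
    have hxmax : max (u - η1) ((q:ℝ)/2) < x := by rw [hx]; linarith
    have hwy : w < y := by rw [hy]; linarith
    have hyu : y < u := by rw [hy]; linarith
    have hjxy := hself x y (le_trans (le_max_right _ _) hxmax.le) hxw hwy
    have hxball : |g x - l| < δ/4 := by
      have : x ∈ Iio u := by rw [Set.mem_Iio]; linarith
      have hd : dist x u < η1 := by
        rw [Real.dist_eq, abs_of_nonpos (by linarith)]
        have := le_max_left (u - η1) ((q:ℝ)/2)
        linarith [hxmax]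
      simpa [Real.dist_eq] using hη1 this hd
    have hyball : |g y - l| < δ/4 := by
      have : y ∈ Iio u := Set.mem_Iio.2 hyu
      have hd : dist y u < η1 := by
        rw [Real.dist_eq, abs_of_nonpos (by linarith)]
        linarith [hxmax, le_max_left (u - η1) ((q:ℝ)/2)]
      simpa [Real.dist_eq] using hη1 this hd
    have : g y - g x < δ/2 := by
      have h1 := abs_lt.1 hxball
      have h2 := abs_lt.1 hyball
      linarith [h1.1, h1.2, h2.1, h2.2]
    linarith
  · exact heq
  · exfalso
    -- w ∈ (u, r] ⊆ (u, u+η2): contradiction with right-continuity at u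
    have hwr : w ≤ (r:ℝ) := hmem.2
    set x : ℝ := (u + w)/2 with hx
    set y : ℝ := (w + (u + η2))/2 with hy
    have hux : u < x := by rw [hx]; linarith
    have hxw : x < w := by rw [hx]; linarith
    have hwy : w < y := by rw [hy]; linarith [hr2]
    have hyη : y < u + η2 := by rw [hy]; linarith [hr2]
    have hjxy := hself x y (by linarith) hxw hwy
    have hxball : |g x - g u| < δ/4 := by
      have : x ∈ Ici u := Set.mem_Ici.2 hux.le
      have hd : dist x u < η2 := by
        rw [Real.dist_eq, abs_of_nonneg (by linarith)]
        linarith [hr2]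
      simpa [Real.dist_eq] using hη2 this hd
    have hyball : |g y - g u| < δ/4 := by
      have : y ∈ Ici u := Set.mem_Ici.2 (by linarith)
      have hd : dist y u < η2 := by
        rw [Real.dist_eq, abs_of_nonneg (by linarith)]
        linarith
      simpa [Real.dist_eq] using hη2 this hd
    have : g y - g x < δ/2 := by
      have h1 := abs_lt.1 hxball
      have h2 := abs_lt.1 hyball
      linarith [h1.1, h1.2, h2.1, h2.2]
    linarith




variable {Ω : Type*} [MeasurableSpace Ω] {P : Measure Ω} [IsProbabilityMeasure P]
  {X : ℝ → Ω → ℝ}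

lemma levy_small_time (hX : IsLevyProcess P X) {s : ℕ → ℝ} (hs0 : ∀ m, 0 ≤ s m)
    (hs : Tendsto s atTop (𝓝 0)) {c : ℝ} (hc : 0 < c) :
    Tendsto (fun m => P {ω | c ≤ |X (s m) ω|}) atTop (𝓝 0) := by
  have hae : ∀ᵐ ω ∂P, Tendsto (fun m => X (s m) ω) atTop (𝓝 0) := by
    filter_upwards [hX.right_cont, hX.init] with ω hrc h0
    have h := (hrc 0 le_rfl)
    rw [ContinuousWithinAt, h0] at h
    refine h.comp ?_
    rw [tendsto_nhdsWithin_iff]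
    exact ⟨hs, Eventually.of_forall (fun m => hs0 m)⟩
  -- dominated convergence on indicators
  have hmeas : ∀ m, MeasurableSet {ω | c ≤ |X (s m) ω|} :=
    fun m => (hX.measurable (s m)).abs measurableSet_Ici
  have := tendsto_lintegral_of_dominated_convergence (μ := P)
    (F := fun m ω => ({ω | c ≤ |X (s m) ω|}).indicator (fun _ => (1:ℝ≥0∞)) ω)
    (f := fun _ => 0) (bound := fun _ => 1)
    (fun m => (measurable_const.indicator (hmeas m)))
    (fun m => Eventually.of_forall (fun ω => by
      by_cases h : ω ∈ {ω | c ≤ |X (s m) ω|} <;>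
        simp [Set.indicator_of_mem, Set.indicator_of_notMem, h]))
    (by simp)
    (by
      filter_upwards [hae] with ω hω
      have : ∀ᶠ m in atTop, ({ω | c ≤ |X (s m) ω|}).indicator (fun _ => (1:ℝ≥0∞)) ω = 0 := by
        have habs : Tendsto (fun m => |X (s m) ω|) atTop (𝓝 0) := by
          simpa using hω.abs
        have hev : ∀ᶠ m in atTop, |X (s m) ω| < c :=
          habs.eventually (eventually_lt_nhds hc)
        filter_upwards [hev] with m hm
        exact Set.indicator_of_notMem (by simp [Set.mem_setOf_eq, not_le.2 hm]) _
      exact Tendsto.congr' (this.mono (fun m hm => hm.symm)) tendsto_const_nhds)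
  simp only [lintegral_zero] at this
  refine this.congr (fun m => ?_)
  exact lintegral_indicator_one (hmeas m)

lemma ae_tendsto_lapx_levy (hX : IsLevyProcess P X) {t : ℝ} (ht : 0 < t) :
    ∀ᵐ ω ∂P, Tendsto (fun m => X (lapx t m) ω) atTop (𝓝 (X t ω)) := by
  -- the sequence of increments
  set s : ℕ → ℝ := fun m => t - lapx t m with hs_def
  have hs_pos : ∀ m, 0 < s m := fun m => by simp [hs_def, lapx_lt t m]
  have hs_to : Tendsto s atTop (𝓝 0) := by
    have := (tendsto_lapx t).mono_right nhdsWithin_le_nhds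
    simpa [hs_def] using (tendsto_const_nhds (x := t)).sub this
  -- the measures of deviation events tend to zero
  have hP : ∀ k : ℕ, Tendsto (fun m => P {ω | 1/((k:ℝ)+1) ≤ |X t ω - X (lapx t m) ω|})
      atTop (𝓝 0) := by
    intro k
    have hc : (0:ℝ) < 1/((k:ℝ)+1) := by positivity
    have key := levy_small_time hX (fun m => (hs_pos m).le) hs_to hc
    -- eventually `lapx t m ≥ 0`, and then the two probabilities agree
    have hev : ∀ᶠ m in atTop, P {ω | 1/((k:ℝ)+1) ≤ |X t ω - X (lapx t m) ω|}
        = P {ω | 1/((k:ℝ)+1) ≤ |X (s m) ω|} := by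
      have h0 : ∀ᶠ m in atTop, 0 ≤ lapx t m := by
        have := (tendsto_lapx t).mono_right nhdsWithin_le_nhds
        exact this.eventually (eventually_gt_nhds ht) |>.mono (fun m hm => hm.le)
      filter_upwards [h0] with m hm
      have hmap := hX.stat_increments (s m) (lapx t m) (hs_pos m).le hm
      have hts : lapx t m + s m = t := by simp [hs_def]
      rw [hts] at hmap
      have hC : MeasurableSet {x : ℝ | 1/((k:ℝ)+1) ≤ |x|} :=
        measurable_abs measurableSet_Ici
      have h1 := Measure.map_apply (μ := P) (f := fun ω => X t ω - X (lapx t m) ω) ((hX.measurable t).sub (hX.measurable (lapx t m))) hC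
      have h2 := Measure.map_apply (μ := P) (hX.measurable (s m)) hC
      calc P {ω | 1/((k:ℝ)+1) ≤ |X t ω - X (lapx t m) ω|}
          = P.map (fun ω => X t ω - X (lapx t m) ω) {x : ℝ | 1/((k:ℝ)+1) ≤ |x|} := by
            rw [h1]; rfl
        _ = P.map (X (s m)) {x : ℝ | 1/((k:ℝ)+1) ≤ |x|} := by rw [hmap]
        _ = P {ω | 1/((k:ℝ)+1) ≤ |X (s m) ω|} := by rw [h2]; rfl
    exact key.congr' (hev.mono (fun m hm => hm.symm))
  -- each tail intersection is null
  have hnull : ∀ k N : ℕ,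
      P (⋂ m, ⋂ (_ : N ≤ m), {ω | 1/((k:ℝ)+1) ≤ |X t ω - X (lapx t m) ω|}) = 0 := by
    intro k N
    refine le_antisymm ?_ zero_le
    refine ge_of_tendsto (hP k) ?_
    filter_upwards [eventually_ge_atTop N] with m hm
    exact measure_mono (Set.iInter_subset_of_subset m (Set.iInter_subset _ hm))
  have hnull2 : P (⋃ k : ℕ, ⋃ N : ℕ,
      ⋂ m, ⋂ (_ : N ≤ m), {ω | 1/((k:ℝ)+1) ≤ |X t ω - X (lapx t m) ω|}) = 0 := by
    rw [measure_iUnion_null_iff]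
    intro k
    rw [measure_iUnion_null_iff]
    exact fun N => hnull k N
  have hae_not : ∀ᵐ ω ∂P, ω ∉ ⋃ k : ℕ, ⋃ N : ℕ,
      ⋂ m, ⋂ (_ : N ≤ m), {ω | 1/((k:ℝ)+1) ≤ |X t ω - X (lapx t m) ω|} :=
    (ae_iff.2 (by
      rw [show {a | ¬ a ∉ ⋃ k : ℕ, ⋃ N : ℕ,
        ⋂ m, ⋂ (_ : N ≤ m), {ω | 1/((k:ℝ)+1) ≤ |X t ω - X (lapx t m) ω|}} = ⋃ k : ℕ, ⋃ N : ℕ,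
        ⋂ m, ⋂ (_ : N ≤ m), {ω | 1/((k:ℝ)+1) ≤ |X t ω - X (lapx t m) ω|} from by
          ext ω; simp only [Set.mem_setOf_eq, not_not]]
      exact hnull2))
  filter_upwards [hX.left_lim, hae_not] with ω hll hnot
  obtain ⟨l, hl⟩ := hll t ht
  have hlim : Tendsto (fun m => X (lapx t m) ω) atTop (𝓝 l) := hl.comp (tendsto_lapx t)
  by_cases hlX : l = X t ω
  · rwa [hlX] at hlim
  · exfalso
    apply hnot
    have hd : 0 < |X t ω - l| := by
      rw [abs_pos, sub_ne_zero]
      exact fun h => hlX h.symm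
    obtain ⟨k, hk⟩ := exists_nat_one_div_lt hd
    have : Tendsto (fun m => |X t ω - X (lapx t m) ω|) atTop (𝓝 |X t ω - l|) :=
      ((tendsto_const_nhds (x := X t ω)).sub hlim).abs
    have hev : ∀ᶠ m in atTop, 1/((k:ℝ)+1) ≤ |X t ω - X (lapx t m) ω| := by
      refine (this.eventually (eventually_gt_nhds hk)).mono (fun m hm => hm.le)
    obtain ⟨N, hN⟩ := eventually_atTop.1 hev
    refine Set.mem_iUnion.2 ⟨k, Set.mem_iUnion.2 ⟨N, ?_⟩⟩
    exact Set.mem_iInter.2 (fun m => Set.mem_iInter.2 (fun hm => hN m hm))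

lemma ae_not_bad (hX : IsLevyProcess P X) {t : ℝ} (ht : 0 < t) :
    ∀ᵐ ω ∂P, ¬ bad t (fun u => X u ω) := by
  filter_upwards [ae_tendsto_lapx_levy hX ht, hX.right_cont] with ω hlap hrc
  have hrap : Tendsto (fun m => X (rapx t m) ω) atTop (𝓝 (X t ω)) :=
    (hrc t ht.le).tendsto.comp (tendsto_rapx t)
  rw [bad, not_not]
  simpa using hlap.sub hrap

lemma null_of_indep {U : Ω → ℝ} {W : Ω → (ℝ → ℝ)} (hU : Measurable U) (hW : Measurable W)
    (h : IndepFun U W P) {B : Set (ℝ × (ℝ → ℝ))} (hB : MeasurableSet B)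
    (hnull : ∀ t : ℝ, P.map W {f | (t, f) ∈ B} = 0) :
    P {ω | (U ω, W ω) ∈ B} = 0 := by
  have hpair : Measurable (fun ω => (U ω, W ω)) := hU.prodMk hW
  haveI : IsProbabilityMeasure (P.map W) := Measure.isProbabilityMeasure_map hW.aemeasurable
  have hmap : P.map (fun ω => (U ω, W ω)) = (P.map U).prod (P.map W) :=
    (indepFun_iff_map_prod_eq_prod_map_map hU.aemeasurable hW.aemeasurable).1 h
  have h1 : P {ω | (U ω, W ω) ∈ B} = P.map (fun ω => (U ω, W ω)) B :=
    (Measure.map_apply hpair hB).symm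
  rw [h1, hmap, Measure.prod_apply hB]
  have : ∀ t : ℝ, P.map W (Prod.mk t ⁻¹' B) = 0 := fun t => hnull t
  simp only [this]
  simp



/-- all pathwise properties needed for the deterministic argument. -/
structure GoodPath (Xf Sf Hf : ℝ → ℝ) : Prop where
  X0 : Xf 0 = 0
  S0 : Sf 0 = 0
  H0 : Hf 0 = 0
  Xrc : ∀ t, 0 ≤ t → ContinuousWithinAt Xf (Ici t) t
  Xll : ∀ t, 0 < t → ∃ l, Tendsto Xf (𝓝[Iio t] t) (𝓝 l)
  Src : ∀ t, 0 ≤ t → ContinuousWithinAt Sf (Ici t) t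
  Sll : ∀ t, 0 < t → ∃ l, Tendsto Sf (𝓝[Iio t] t) (𝓝 l)
  Smono : StrictMonoOn Sf (Ici 0)
  Hrc : ∀ t, 0 ≤ t → ContinuousWithinAt Hf (Ici t) t
  Hmono : MonotoneOn Hf (Ici 0)
  J1 : ∀ u, 0 < u → (∃ δ, 0 < δ ∧ jmp 0 δ u Sf) → Tendsto Xf (𝓝[Iio u] u) (𝓝 (Xf u))
  J2 : ∀ u l, 0 < u → 0 < l → (∃ δ, 0 < δ ∧ jmp 0 δ u Sf) →
    Tendsto Sf (𝓝[Iio u] u) (𝓝 l) → Tendsto (fun m => Hf (lapx l m)) atTop (𝓝 (Hf l))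

/-- pathwise version of the inverse subordinator. -/
def ell (Sf : ℝ → ℝ) (t : ℝ) : ℝ := sInf {s : ℝ | 0 < s ∧ t < Sf s}

section pathwise

variable {Xf Sf Hf : ℝ → ℝ} {a : ℝ}

lemma Spos (G : GoodPath Xf Sf Hf) {s : ℝ} (hs : 0 < s) : 0 < Sf s := by
  have := G.Smono (Set.mem_Ici.2 le_rfl) (Set.mem_Ici.2 hs.le) hs
  rwa [G.S0] at this

lemma Smono' (G : GoodPath Xf Sf Hf) : MonotoneOn Sf (Ici 0) := G.Smono.monotoneOn

lemma ell_nonneg (Sf : ℝ → ℝ) (t : ℝ) : 0 ≤ ell Sf t :=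
  Real.sInf_nonneg (fun x hx => hx.1.le)

lemma ell_bddBelow (Sf : ℝ → ℝ) (t : ℝ) : BddBelow {s : ℝ | 0 < s ∧ t < Sf s} :=
  ⟨0, fun x hx => hx.1.le⟩

lemma ell_empty {t : ℝ} (h : ¬ ∃ s, 0 < s ∧ t < Sf s) : ell Sf t = 0 := by
  have : {s : ℝ | 0 < s ∧ t < Sf s} = ∅ := by
    ext s; simp only [Set.mem_setOf_eq, Set.mem_empty_iff_false, iff_false]
    exact fun hs => h ⟨s, hs⟩
  rw [ell, this, Real.sInf_empty]

lemma le_S_ell (G : GoodPath Xf Sf Hf) {t : ℝ} (hNE : ∃ s, 0 < s ∧ t < Sf s) :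
    t ≤ Sf (ell Sf t) := by
  by_contra hlt
  push_neg at hlt
  have h0 : 0 ≤ ell Sf t := ell_nonneg Sf t
  have hrc := (G.Src _ h0).tendsto
  have hev : ∀ᶠ s in 𝓝[Ici (ell Sf t)] (ell Sf t), Sf s < t :=
    hrc.eventually (eventually_lt_nhds hlt)
  rw [eventually_nhdsWithin_iff, Metric.eventually_nhds_iff] at hev
  obtain ⟨ε, hεpos, hε⟩ := hev
  obtain ⟨s, hs, hslt⟩ := Real.lt_sInf_add_pos (⟨_, hNE.choose_spec⟩ :
    Set.Nonempty {s : ℝ | 0 < s ∧ t < Sf s}) hεpos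
  have hges : ell Sf t ≤ s := csInf_le (ell_bddBelow Sf t) hs
  have : Sf s < t := by
    apply hε
    · rw [Real.dist_eq, abs_of_nonneg (by linarith)]
      have hslt' : s < ell Sf t + ε := hslt
      linarith
    · exact Set.mem_Ici.2 hges
  exact absurd hs.2 (not_lt.2 this.le)

lemma ell_pos (G : GoodPath Xf Sf Hf) {t : ℝ} (ht : 0 < t)
    (hNE : ∃ s, 0 < s ∧ t < Sf s) : 0 < ell Sf t := by
  -- there is s₀ > 0 with Sf s₀ < t
  have hrc := (G.Src 0 le_rfl).tendsto
  rw [G.S0] at hrc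
  have hev : ∀ᶠ s in 𝓝[Ici 0] 0, Sf s < t := hrc.eventually (eventually_lt_nhds ht)
  rw [eventually_nhdsWithin_iff, Metric.eventually_nhds_iff] at hev
  obtain ⟨ε, hεpos, hε⟩ := hev
  have hs₀ : Sf (ε/2) < t := by
    apply hε
    · rw [Real.dist_eq, abs_of_nonneg (by linarith)]; linarith
    · exact Set.mem_Ici.2 (by linarith)
  have hlb : ∀ s ∈ {s : ℝ | 0 < s ∧ t < Sf s}, ε/2 ≤ s := by
    intro s hs
    by_contra hlt
    push_neg at hlt
    have : Sf s ≤ Sf (ε/2) := Smono' G (Set.mem_Ici.2 hs.1.le) (Set.mem_Ici.2 (by linarith)) hlt.le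
    linarith [hs.2]
  have : ε/2 ≤ ell Sf t := le_csInf ⟨_, hNE.choose_spec⟩ hlb
  linarith

lemma ell_S (G : GoodPath Xf Sf Hf) {v : ℝ} (hv : 0 < v) : ell Sf (Sf v) = v := by
  have hset : {s : ℝ | 0 < s ∧ Sf v < Sf s} = Set.Ioi v := by
    ext s
    simp only [Set.mem_setOf_eq, Set.mem_Ioi]
    constructor
    · rintro ⟨hs0, hs⟩
      by_contra hle
      push_neg at hle
      exact absurd hs (not_lt.2 (Smono' G (Set.mem_Ici.2 hs0.le) (Set.mem_Ici.2 hv.le) hle))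
    · intro hvs
      exact ⟨lt_trans hv hvs, G.Smono (Set.mem_Ici.2 hv.le)
        (Set.mem_Ici.2 (lt_trans hv hvs).le) hvs⟩
  rw [ell, hset, csInf_Ioi]

/-- structure of a jump interval of `Sf` around a time `t` not in the closed range of `Sf`. -/
lemma jump_structure (G : GoodPath Xf Sf Hf) {t : ℝ} (ht : 0 < t)
    (hNE : ∃ s, 0 < s ∧ t < Sf s) (hgt : t < Sf (ell Sf t)) :
    ∃ l : ℝ, 0 < ell Sf t ∧
      Tendsto Sf (𝓝[Iio (ell Sf t)] (ell Sf t)) (𝓝 l) ∧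
      (∀ v, 0 ≤ v → v < ell Sf t → Sf v ≤ l) ∧
      0 ≤ l ∧ l ≤ t ∧
      jmp 0 (Sf (ell Sf t) - t) (ell Sf t) Sf ∧
      (∀ t', 0 < t' → l ≤ t' → t' < Sf (ell Sf t) → ell Sf t' = ell Sf t) := by
  set u : ℝ := ell Sf t with hu
  set d : ℝ := Sf u with hd
  have hu0 : 0 < u := ell_pos G ht hNE
  -- Sf is at most t strictly before u
  have hvt : ∀ v, 0 ≤ v → v < u → Sf v ≤ t := by
    intro v hv0 hvu
    rcases eq_or_lt_of_le hv0 with rfl | hvpos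
    · rw [G.S0]; exact ht.le
    · by_contra hlt
      push_neg at hlt
      have : v ∈ {s : ℝ | 0 < s ∧ t < Sf s} := ⟨hvpos, hlt⟩
      have h2 : u ≤ v := csInf_le (ell_bddBelow Sf t) this
      linarith
  obtain ⟨l, hl⟩ := G.Sll u hu0
  have hvl : ∀ v, 0 ≤ v → v < u → Sf v ≤ l := by
    intro v hv0 hvu
    refine ge_of_tendsto hl ?_
    filter_upwards [Ioo_mem_nhdsLT_of_mem (Set.mem_Ioc.2 ⟨hvu, le_rfl⟩)] with w hw
    exact Smono' G (Set.mem_Ici.2 hv0) (Set.mem_Ici.2 (le_trans hv0 hw.1.le)) hw.1.le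
  have hl0 : 0 ≤ l := by
    have := hvl 0 le_rfl hu0
    rwa [G.S0] at this
  have hlt' : l ≤ t := by
    refine le_of_tendsto hl ?_
    filter_upwards [Ioo_mem_nhdsLT_of_mem (Set.mem_Ioc.2 ⟨hu0, le_rfl⟩)] with w hw
    exact hvt w hw.1.le hw.2
  have hjmp : jmp 0 (d - t) u Sf := by
    intro x y hx0 hxu huy
    have h1 : Sf x ≤ t := hvt x hx0 hxu
    have h2 : d < Sf y := G.Smono (Set.mem_Ici.2 hu0.le)
      (Set.mem_Ici.2 (le_trans hu0.le huy.le)) huy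
    linarith
  have hellconst : ∀ t', 0 < t' → l ≤ t' → t' < d → ell Sf t' = u := by
    intro t' ht'0 hlt'0 ht'd
    have hset : {s : ℝ | 0 < s ∧ t' < Sf s} = Set.Ici u := by
      ext s
      simp only [Set.mem_setOf_eq, Set.mem_Ici]
      constructor
      · rintro ⟨hs0, hs⟩
        by_contra hle
        push_neg at hle
        have := hvl s hs0.le hle
        linarith
      · intro hus
        refine ⟨lt_of_lt_of_le hu0 hus, ?_⟩
        rcases eq_or_lt_of_le hus with rfl | hlt2
        · exact ht'd
        · exact lt_trans ht'd (G.Smono (Set.mem_Ici.2 hu0.le)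
            (Set.mem_Ici.2 (le_trans hu0.le hlt2.le)) hlt2)
    rw [ell, hset, csInf_Ici]
  exact ⟨l, hu0, hl, hvl, hl0, hlt', hjmp, hellconst⟩

lemma H_Slim (G : GoodPath Xf Sf Hf) {u l : ℝ} (hu : 0 < u)
    (hjump : ∃ δ, 0 < δ ∧ jmp 0 δ u Sf)
    (hl : Tendsto Sf (𝓝[Iio u] u) (𝓝 l))
    (hvl : ∀ v, 0 ≤ v → v < u → Sf v ≤ l) (hl0 : 0 < l) :
    Tendsto (fun v => Hf (Sf v)) (𝓝[Iio u] u) (𝓝 (Hf l)) := by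
  have hJ2 := G.J2 u l hu hl0 hjump hl
  rw [Metric.tendsto_nhds]
  intro ε hε
  have hev1 : ∀ᶠ m in atTop, dist (Hf (lapx l m)) (Hf l) < ε :=
    (Metric.tendsto_nhds.1 hJ2) ε hε
  have hev2 : ∀ᶠ m in atTop, 0 ≤ lapx l m := by
    have := (tendsto_lapx l).mono_right nhdsWithin_le_nhds
    exact (this.eventually (eventually_gt_nhds (half_lt_self hl0))).mono
      (fun m hm => le_of_lt (lt_of_lt_of_le (by linarith) hm.le))
  obtain ⟨m, hm1, hm2⟩ := (hev1.and hev2).exists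
  have hlx : Hf (lapx l m) ≤ Hf l :=
    G.Hmono (Set.mem_Ici.2 hm2) (Set.mem_Ici.2 (le_trans hm2 (lapx_lt l m).le)) (lapx_lt l m).le
  have hm1' : Hf l - Hf (lapx l m) < ε := by
    rw [Real.dist_eq, abs_of_nonpos (by linarith)] at hm1
    linarith
  filter_upwards [hl.eventually (eventually_gt_nhds (lapx_lt l m)),
    Ioo_mem_nhdsLT_of_mem (Set.mem_Ioc.2 ⟨hu, le_rfl⟩)] with v hv1 hv2
  have hSv0 : 0 ≤ Sf v := le_trans hm2 hv1.le
  have hlow : Hf (lapx l m) ≤ Hf (Sf v) :=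
    G.Hmono (Set.mem_Ici.2 hm2) (Set.mem_Ici.2 hSv0) hv1.le
  have hhigh : Hf (Sf v) ≤ Hf l :=
    G.Hmono (Set.mem_Ici.2 hSv0) (Set.mem_Ici.2 hl0.le) (hvl v hv2.1.le hv2.2)
  rw [Real.dist_eq, abs_of_nonpos (by linarith)]
  linarith

/-- the two passage sets, pathwise. -/
def Dset (Xf Sf Hf : ℝ → ℝ) (a : ℝ) : Set ℝ := {t | 0 < t ∧ a + Hf t < Xf (ell Sf t)}
def Dset' (Xf Sf Hf : ℝ → ℝ) (a : ℝ) : Set ℝ :=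
  {t | 0 < t ∧ a < Xf (ell Sf t) - Hf (Sf (ell Sf t))}

lemma D_NE (G : GoodPath Xf Sf Hf) (ha : 0 ≤ a) {t : ℝ} (ht : t ∈ Dset Xf Sf Hf a) :
    ∃ s, 0 < s ∧ t < Sf s := by
  simp only [Dset, Set.mem_setOf_eq] at ht
  by_contra hNE
  rw [ell_empty hNE, G.X0] at ht
  have hHt : 0 ≤ Hf t := by
    have := G.Hmono (Set.mem_Ici.2 le_rfl) (Set.mem_Ici.2 ht.1.le) ht.1.le
    rwa [G.H0] at this
  linarith [ht.2]

lemma D'_NE (G : GoodPath Xf Sf Hf) (ha : 0 ≤ a) {t : ℝ} (ht : t ∈ Dset' Xf Sf Hf a) :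
    ∃ s, 0 < s ∧ t < Sf s := by
  simp only [Dset', Set.mem_setOf_eq] at ht
  by_contra hNE
  rw [ell_empty hNE, G.X0, G.S0, G.H0] at ht
  linarith [ht.2]

lemma D'_subset_D (G : GoodPath Xf Sf Hf) (ha : 0 ≤ a) :
    Dset' Xf Sf Hf a ⊆ Dset Xf Sf Hf a := by
  intro t ht
  have hNE := D'_NE G ha ht
  have htS : t ≤ Sf (ell Sf t) := le_S_ell G hNE
  have hmono : Hf t ≤ Hf (Sf (ell Sf t)) :=
    G.Hmono (Set.mem_Ici.2 ht.1.le) (Set.mem_Ici.2 (le_trans ht.1.le htS)) htS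
  exact ⟨ht.1, by have := ht.2; linarith⟩

/-- STATEMENT (i), pathwise. -/
theorem pathI (G : GoodPath Xf Sf Hf) (ha : 0 ≤ a)
    (hT : sInf (ENNReal.ofReal '' Dset Xf Sf Hf a) < ⊤) :
    Sf (ell Sf (sInf (ENNReal.ofReal '' Dset Xf Sf Hf a)).toReal)
      = (sInf (ENNReal.ofReal '' Dset Xf Sf Hf a)).toReal := by
  set T : ℝ≥0∞ := sInf (ENNReal.ofReal '' Dset Xf Sf Hf a) with hTdef
  set τ : ℝ := T.toReal with hτdef
  have hτ0 : 0 ≤ τ := ENNReal.toReal_nonneg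
  have hTof : ENNReal.ofReal τ = T := ENNReal.ofReal_toReal hT.ne
  have hDne : (Dset Xf Sf Hf a).Nonempty := by
    by_contra hemp
    rw [Set.not_nonempty_iff_eq_empty] at hemp
    rw [hTdef, hemp] at hT
    simp at hT
  have hτlb : ∀ t ∈ Dset Xf Sf Hf a, τ ≤ t := by
    intro t htD
    have h1 : T ≤ ENNReal.ofReal t := sInf_le (Set.mem_image_of_mem _ htD)
    rw [← hTof] at h1
    exact (ENNReal.ofReal_le_ofReal_iff htD.1.le).1 h1
  have hnocross : ∀ t, 0 < t → t < τ → ¬ (a + Hf t < Xf (ell Sf t)) := by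
    intro t ht0 htτ hcross
    exact absurd (hτlb t ⟨ht0, hcross⟩) (not_le.2 htτ)
  rcases eq_or_lt_of_le hτ0 with hτeq | hτpos
  · -- τ = 0
    rw [← hτeq]
    have hset : {s : ℝ | 0 < s ∧ (0:ℝ) < Sf s} = Set.Ioi 0 := by
      ext s
      simp only [Set.mem_setOf_eq, Set.mem_Ioi]
      exact ⟨fun h => h.1, fun h => ⟨h, Spos G h⟩⟩
    rw [ell, hset, csInf_Ioi, G.S0]
  · -- τ > 0
    obtain ⟨t₁, ht₁⟩ := hDne
    have hNEτ : ∃ s, 0 < s ∧ τ < Sf s := by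
      obtain ⟨s, hs1, hs2⟩ := D_NE G ha ht₁
      exact ⟨s, hs1, lt_of_le_of_lt (hτlb t₁ ht₁) hs2⟩
    by_contra hne
    have hgt : τ < Sf (ell Sf τ) := lt_of_le_of_ne (le_S_ell G hNEτ) (Ne.symm hne)
    obtain ⟨l, hu0, hl, hvl, hl0, hlτ, hjmp, hellconst⟩ := jump_structure G hτpos hNEτ hgt
    set u : ℝ := ell Sf τ with hudef
    set d : ℝ := Sf u with hddef
    have hjump_ex : ∃ δ, 0 < δ ∧ jmp 0 δ u Sf := ⟨d - τ, by linarith, hjmp⟩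
    -- a crossing time in [τ, d)
    have hTd : T < ENNReal.ofReal d := by
      rw [← hTof]
      exact (ENNReal.ofReal_lt_ofReal_iff (by linarith)).2 hgt
    obtain ⟨x, hxmem, hxlt⟩ := sInf_lt_iff.1 hTd
    obtain ⟨t₀, ht₀D, rfl⟩ := hxmem
    have ht₀d : t₀ < d := by
      have := (ENNReal.ofReal_lt_ofReal_iff_of_nonneg ht₀D.1.le).1 hxlt
      exact this
    have hτt₀ : τ ≤ t₀ := hτlb t₀ ht₀D
    have hellt₀ : ell Sf t₀ = u := hellconst t₀ ht₀D.1 (by linarith) ht₀d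
    have hcross₀ : a + Hf t₀ < Xf u := by
      have := ht₀D.2
      rwa [hellt₀] at this
    have hcrossτ : a + Hf τ < Xf u := by
      have : Hf τ ≤ Hf t₀ :=
        G.Hmono (Set.mem_Ici.2 hτ0) (Set.mem_Ici.2 (le_trans hτ0 hτt₀)) hτt₀
      linarith
    rcases eq_or_lt_of_le hlτ with hleq | hllt
    · -- l = τ : limit argument gives a contradiction
      have hXlim : Tendsto Xf (𝓝[Iio u] u) (𝓝 (Xf u)) := G.J1 u hu0 hjump_ex
      have hHlim : Tendsto (fun v => Hf (Sf v)) (𝓝[Iio u] u) (𝓝 (Hf l)) :=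
        H_Slim G hu0 hjump_ex hl hvl (by rw [hleq]; exact hτpos)
      have hineq : ∀ᶠ v in 𝓝[Iio u] u, Xf v ≤ a + Hf (Sf v) := by
        filter_upwards [Ioo_mem_nhdsLT_of_mem (Set.mem_Ioc.2 ⟨hu0, le_rfl⟩)] with v hv
        have hSv_pos : 0 < Sf v := Spos G hv.1
        have hSv_lt : Sf v < τ := by
          have h1 : Sf v < Sf ((v + u)/2) := G.Smono (Set.mem_Ici.2 hv.1.le)
            (Set.mem_Ici.2 (by linarith [hv.1, hv.2])) (by linarith [hv.2])
          have h2 : Sf ((v + u)/2) ≤ l := hvl _ (by linarith [hv.1]) (by linarith [hv.2])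
          rw [← hleq]
          linarith
        have hnc := hnocross (Sf v) hSv_pos hSv_lt
        rw [ell_S G hv.1] at hnc
        linarith [not_lt.1 hnc]
      have hlim_le : Xf u ≤ a + Hf l := by
        have hsum : Tendsto (fun v => a + Hf (Sf v)) (𝓝[Iio u] u) (𝓝 (a + Hf l)) :=
          tendsto_const_nhds.add hHlim
        exact le_of_tendsto_of_tendsto hXlim hsum hineq
      rw [hleq] at hlim_le
      linarith
    · -- l < τ : a crossing strictly before τ, contradiction
      set t₂ : ℝ := (l + τ)/2 with ht₂def
      have ht₂pos : 0 < t₂ := by rw [ht₂def]; linarith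
      have hlt₂ : l ≤ t₂ := by rw [ht₂def]; linarith
      have ht₂τ : t₂ < τ := by rw [ht₂def]; linarith
      have hellt₂ : ell Sf t₂ = u := hellconst t₂ ht₂pos hlt₂ (by linarith)
      have hcross₂ : a + Hf t₂ < Xf (ell Sf t₂) := by
        rw [hellt₂]
        have : Hf t₂ ≤ Hf τ :=
          G.Hmono (Set.mem_Ici.2 ht₂pos.le) (Set.mem_Ici.2 hτ0) ht₂τ.le
        linarith
      exact hnocross t₂ ht₂pos ht₂τ hcross₂

/-- STATEMENT (ii), pathwise. -/
theorem pathII (G : GoodPath Xf Sf Hf) (ha : 0 ≤ a) :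
    sInf (ENNReal.ofReal '' Dset Xf Sf Hf a)
      = sInf (ENNReal.ofReal '' Dset' Xf Sf Hf a) := by
  set T : ℝ≥0∞ := sInf (ENNReal.ofReal '' Dset Xf Sf Hf a) with hTdef
  set T' : ℝ≥0∞ := sInf (ENNReal.ofReal '' Dset' Xf Sf Hf a) with hT'def
  refine le_antisymm ?_ ?_
  · exact sInf_le_sInf (Set.image_mono (D'_subset_D G ha))
  · -- key claim: every crossing time of the first kind dominates one of the second kind
    have key : ∀ t₁ ∈ Dset Xf Sf Hf a, ∃ t₂ ∈ Dset' Xf Sf Hf a, t₂ ≤ t₁ := by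
      intro t₁ ht₁
      have hNE := D_NE G ha ht₁
      rcases eq_or_lt_of_le (le_S_ell G hNE) with heq | hgt
      · refine ⟨t₁, ⟨ht₁.1, ?_⟩, le_rfl⟩
        rw [← heq]
        linarith [ht₁.2]
      · obtain ⟨l, hu0, hl, hvl, hl0, hlt₁, hjmp, hellconst⟩ :=
          jump_structure G ht₁.1 hNE hgt
        set u : ℝ := ell Sf t₁ with hudef
        set d : ℝ := Sf u with hddef
        have hjump_ex : ∃ δ, 0 < δ ∧ jmp 0 δ u Sf := ⟨d - t₁, by linarith, hjmp⟩
        have hcross : a + Hf t₁ < Xf u := ht₁.2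
        have hl0' : 0 < l := by
          have h1 : Sf (u/2) ≤ l := hvl (u/2) (by linarith) (by linarith)
          have h2 : 0 < Sf (u/2) := Spos G (by linarith)
          linarith
        have hXlim : Tendsto Xf (𝓝[Iio u] u) (𝓝 (Xf u)) := G.J1 u hu0 hjump_ex
        have hHlim : Tendsto (fun v => Hf (Sf v)) (𝓝[Iio u] u) (𝓝 (Hf l)) :=
          H_Slim G hu0 hjump_ex hl hvl hl0'
        have hgap : a < Xf u - Hf l := by
          have : Hf l ≤ Hf t₁ :=
            G.Hmono (Set.mem_Ici.2 hl0) (Set.mem_Ici.2 ht₁.1.le) hlt₁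
          linarith
        have hev : ∀ᶠ v in 𝓝[Iio u] u, a < Xf v - Hf (Sf v) :=
          (hXlim.sub hHlim).eventually (eventually_gt_nhds hgap)
        obtain ⟨v, hv1, hv2⟩ :=
          (hev.and (Ioo_mem_nhdsLT_of_mem (Set.mem_Ioc.2 ⟨hu0, le_rfl⟩))).exists
        refine ⟨Sf v, ⟨Spos G hv2.1, ?_⟩, ?_⟩
        · rw [ell_S G hv2.1]
          exact hv1
        · exact le_trans (hvl v hv2.1.le hv2.2) hlt₁
    refine ENNReal.le_of_forall_pos_le_add (fun ε hε hTlt => ?_)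
    have hTT : T < T + ε := ENNReal.lt_add_right hTlt.ne (by exact_mod_cast hε.ne')
    obtain ⟨x, hxmem, hxlt⟩ := sInf_lt_iff.1 hTT
    obtain ⟨t₁, ht₁D, rfl⟩ := hxmem
    obtain ⟨t₂, ht₂D, ht₂le⟩ := key t₁ ht₁D
    calc T' ≤ ENNReal.ofReal t₂ := sInf_le (Set.mem_image_of_mem _ ht₂D)
      _ ≤ ENNReal.ofReal t₁ := ENNReal.ofReal_le_ofReal ht₂le
      _ ≤ T + ε := hxlt.le

end pathwise

section glue

lemma tendsto_left_of_not_bad {f : ℝ → ℝ} {u : ℝ}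
    (hrc : ContinuousWithinAt f (Ici u) u) (hll : ∃ l, Tendsto f (𝓝[Iio u] u) (𝓝 l))
    (hnb : ¬ bad u f) : Tendsto f (𝓝[Iio u] u) (𝓝 (f u)) := by
  obtain ⟨l, hl⟩ := hll
  have h1 : Tendsto (fun m => f (lapx u m)) atTop (𝓝 l) := hl.comp (tendsto_lapx u)
  have h2 : Tendsto (fun m => f (rapx u m)) atTop (𝓝 (f u)) := hrc.tendsto.comp (tendsto_rapx u)
  rw [bad, not_not] at hnb
  have h3 : l - f u = 0 := tendsto_nhds_unique (h1.sub h2) hnb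
  have hlf : l = f u := by linarith
  rwa [hlf] at hl

lemma goodpath_of_events {Xf Sf Hf : ℝ → ℝ}
    (hX0 : Xf 0 = 0) (hS0 : Sf 0 = 0) (hH0 : Hf 0 = 0)
    (hXrc : ∀ t, 0 ≤ t → ContinuousWithinAt Xf (Ici t) t)
    (hXll : ∀ t, 0 < t → ∃ l, Tendsto Xf (𝓝[Iio t] t) (𝓝 l))
    (hSrc : ∀ t, 0 ≤ t → ContinuousWithinAt Sf (Ici t) t)
    (hSll : ∀ t, 0 < t → ∃ l, Tendsto Sf (𝓝[Iio t] t) (𝓝 l))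
    (hSmono : StrictMonoOn Sf (Ici 0))
    (hHrc : ∀ t, 0 ≤ t → ContinuousWithinAt Hf (Ici t) t)
    (hHmono : MonotoneOn Hf (Ici 0))
    (hE2 : ∀ (q r : ℚ) (i : ℕ), 0 < selQ q r i Sf → ¬ bad (selQ q r i Sf) Xf)
    (hE3 : ∀ (q r : ℚ) (i : ℕ), 0 < lvalQ q r i Sf → ¬ bad (lvalQ q r i Sf) Hf) :
    GoodPath Xf Sf Hf := by
  refine ⟨hX0, hS0, hH0, hXrc, hXll, hSrc, hSll, hSmono, hHrc, hHmono, ?_, ?_⟩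
  · -- J1
    rintro u hu ⟨δ, hδ, hj⟩
    obtain ⟨q, r, i, hsel⟩ := coverage hSmono.monotoneOn hSrc hSll hu hδ hj
    have hnb : ¬ bad u Xf := by
      have := hE2 q r i (by rw [hsel]; exact hu)
      rwa [hsel] at this
    exact tendsto_left_of_not_bad (hXrc u hu.le) (hXll u hu) hnb
  · -- J2
    rintro u l hu hl0 ⟨δ, hδ, hj⟩ hl
    obtain ⟨q, r, i, hsel⟩ := coverage hSmono.monotoneOn hSrc hSll hu hδ hj
    have hlv : lvalQ q r i Sf = l := lvalQ_eq hsel hl hl0.le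
    have hnb : ¬ bad l Hf := by
      have := hE3 q r i (by rw [hlv]; exact hl0)
      rwa [hlv] at this
    rw [bad, not_not] at hnb
    have h2 : Tendsto (fun m => Hf (rapx l m)) atTop (𝓝 (Hf l)) :=
      (hHrc l hl0.le).tendsto.comp (tendsto_rapx l)
    have := hnb.add h2
    simpa using this

variable {Ω : Type*} [MeasurableSpace Ω] {P : Measure Ω} [IsProbabilityMeasure P]
  {X S H : ℝ → Ω → ℝ}

lemma ae_goodpath (hX : IsLevyProcess P X) (hS : IsStrictSubordinator P S)
    (hH : IsSubordinator P H) (hindep : IndepProc3 P X S H) :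
    ∀ᵐ ω ∂P, GoodPath (fun t => X t ω) (fun t => S t ω) (fun t => H t ω) := by
  set Xp : Ω → (ℝ → ℝ) := fun ω t => X t ω with hXp
  set Sp : Ω → (ℝ → ℝ) := fun ω t => S t ω with hSp
  set Hp : Ω → (ℝ → ℝ) := fun ω t => H t ω with hHp
  have hXpm : Measurable Xp := measurable_pi_lambda _ (fun t => hX.measurable t)
  have hSpm : Measurable Sp := measurable_pi_lambda _ (fun t => hS.1.measurable t)
  have hHpm : Measurable Hp := measurable_pi_lambda _ (fun t => hH.1.measurable t)
  have hSX : IndepFun Sp Xp P := by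
    have := hindep.indepFun (i := 1) (j := 0) (by decide)
    simpa [IndepProc3] using this
  have hSH : IndepFun Sp Hp P := by
    have := hindep.indepFun (i := 1) (j := 2) (by decide)
    simpa [IndepProc3] using this
  -- the generic null event for a σ(S)-measurable random time and an independent Levy process
  have keynull : ∀ (W : Ω → (ℝ → ℝ)) (Y : ℝ → Ω → ℝ), Measurable W → IsLevyProcess P Y →
      (∀ ω t, W ω t = Y t ω) → IndepFun Sp W P →
      ∀ (φ : (ℝ → ℝ) → ℝ), Measurable φ →
      ∀ᵐ ω ∂P, 0 < φ (Sp ω) → ¬ bad (φ (Sp ω)) (W ω) := by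
    intro W Y hWm hY hWY hSW φ hφ
    have hUm : Measurable (fun ω => φ (Sp ω)) := hφ.comp hSpm
    have hUind : IndepFun (fun ω => φ (Sp ω)) W P := hSW.comp hφ measurable_id
    have h0 : P {ω | (φ (Sp ω), W ω) ∈ badSet} = 0 := by
      apply null_of_indep hUm hWm hUind measurableSet_badSet
      intro t
      by_cases ht : 0 < t
      · have hsec : MeasurableSet {f : ℝ → ℝ | (t, f) ∈ badSet} :=
          measurable_prodMk_left measurableSet_badSet
        rw [Measure.map_apply hWm hsec]
        have hsub : W ⁻¹' {f | (t, f) ∈ badSet} ⊆ {ω | bad t (W ω)} := by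
          intro ω hω
          exact hω.2
        refine measure_mono_null hsub ?_
        have hae : ∀ᵐ ω ∂P, ¬ bad t (fun u => Y u ω) := ae_not_bad hY ht
        have hae' : ∀ᵐ ω ∂P, ¬ bad t (W ω) := by
          filter_upwards [hae] with ω hω
          have : W ω = fun u => Y u ω := funext (fun u => hWY ω u)
          rwa [this]
        rw [ae_iff] at hae'
        simpa using hae'
      · have : {f : ℝ → ℝ | (t, f) ∈ badSet} = ∅ := by
          ext f
          simp only [Set.mem_setOf_eq, Set.mem_empty_iff_false, iff_false, badSet]
          exact fun h => ht h.1
        rw [this]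
        simp
    rw [ae_iff]
    refine measure_mono_null ?_ h0
    intro ω hω
    simp only [Set.mem_setOf_eq, Classical.not_imp, not_not] at hω
    exact ⟨hω.1, hω.2⟩
  have hE2 : ∀ᵐ ω ∂P, ∀ (q r : ℚ) (i : ℕ),
      0 < selQ q r i (Sp ω) → ¬ bad (selQ q r i (Sp ω)) (Xp ω) := by
    rw [ae_all_iff]
    intro q
    rw [ae_all_iff]
    intro r
    rw [ae_all_iff]
    intro i
    exact keynull Xp X hXpm hX (fun ω t => rfl) hSX (selQ q r i) (measurable_selQ q r i)
  have hE3 : ∀ᵐ ω ∂P, ∀ (q r : ℚ) (i : ℕ),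
      0 < lvalQ q r i (Sp ω) → ¬ bad (lvalQ q r i (Sp ω)) (Hp ω) := by
    rw [ae_all_iff]
    intro q
    rw [ae_all_iff]
    intro r
    rw [ae_all_iff]
    intro i
    exact keynull Hp H hHpm hH.1 (fun ω t => rfl) hSH (lvalQ q r i) (measurable_lvalQ q r i)
  filter_upwards [hX.init, hX.right_cont, hX.left_lim, hS.1.init, hS.1.right_cont,
    hS.1.left_lim, hS.2, hH.1.init, hH.1.right_cont, hH.2, hE2, hE3] with ω
    hX0 hXrc hXll hS0 hSrc hSll hSmono hH0 hHrc hHmono hE2ω hE3ω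
  exact goodpath_of_events hX0 hS0 hH0 hXrc hXll hSrc hSll hSmono hHrc hHmono hE2ω hE3ω

end glue

end St4
end

/-- the graph of `T_a^{(H)}` is contained in the regeneration set
`{t : S_{ℓ_t} = t}`, and `T_a^{(H)}` coincides a.s. with the first passage time of
`t ↦ X_{ℓ_t} - H_{S_{ℓ_t}}` above `a`. -/
theorem statement_4 {Ω : Type*} [MeasurableSpace Ω] (P : MeasureTheory.Measure Ω)
    [MeasureTheory.IsProbabilityMeasure P] (X S H : ℝ → Ω → ℝ)
    (hX : IsLevyProcess P X) (hS : IsStrictSubordinator P S) (hH : IsSubordinator P H)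
    (hindep : IndepProc3 P X S H) :
    ∀ a : ℝ, 0 ≤ a →
      (∀ᵐ ω ∂P, TH X S H a ω < ⊤ →
        S (invS S (TH X S H a ω).toReal ω) ω = (TH X S H a ω).toReal) ∧
      (∀ᵐ ω ∂P, TH X S H a ω =
        passageTime (fun ω t => a < subX X S t ω - H (S (invS S t ω) ω) ω) ω) := by
  intro a ha
  have hae := St4.ae_goodpath hX hS hH hindep
  constructor
  · filter_upwards [hae] with ω hG hlt
    exact St4.pathI hG ha hlt
  · filter_upwards [hae] with ω hG
    exact St4.pathII hG ha
end

section
/- For every a ≥ 0, almost surely inf{t > 0 : X_{ℓ_t} − H_{S_{ℓ_t}} > a} = S_{τ_a}, where τ_a = inf{t > 0 : X_t − H_{S_t} > a} ∈ [0,∞] and S_{τ_a} is understood as ∞ on the event {τ_a = ∞}. -/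
open MeasureTheory ProbabilityTheory Filter Set
open scoped ENNReal NNReal Topology

section Aux

open MeasureTheory ProbabilityTheory Filter Set
open scoped ENNReal NNReal Topology

/-- Rational oscillation criterion: "the left limit along rationals equals the right limit
along rationals" at `r`, in a Cauchy-type formulation. -/
def psiP (x : ℚ → ℝ) (r : ℝ) : Prop :=
  ∀ k : ℕ, ∃ n : ℕ, ∀ q q' : ℚ,
    ((q : ℝ) < r ∧ r - 1 / (n + 1) < (q : ℝ)) →
    (r < (q' : ℝ) ∧ (q' : ℝ) < r + 1 / (n + 1)) →
    |x q - x q'| ≤ 1 / (k + 1)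

lemma psiP_of_tendsto {x : ℝ → ℝ} {r : ℝ}
    (h1 : Tendsto x (𝓝[<] r) (𝓝 (x r)))
    (h2 : ContinuousWithinAt x (Set.Ici r) r) :
    psiP (fun q : ℚ => x q) r := by
  intro k
  have hk1 : (0:ℝ) < 1 / (k + 1) := by positivity
  set ε : ℝ := 1 / (k + 1) / 2 with hε
  have hε0 : 0 < ε := by positivity
  have hl : ∀ᶠ v in 𝓝[<] r, dist (x v) (x r) < ε := Metric.tendsto_nhds.mp h1 ε hε0
  have hr : ∀ᶠ v in 𝓝[≥] r, dist (x v) (x r) < ε := Metric.tendsto_nhds.mp h2 ε hε0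
  rw [eventually_iff, mem_nhdsLT_iff_exists_Ioo_subset] at hl
  rw [eventually_iff, mem_nhdsGE_iff_exists_Ico_subset] at hr
  obtain ⟨l', hl'r, hsubl⟩ := hl
  obtain ⟨u, hur, hsubr⟩ := hr
  obtain ⟨n, hn⟩ := exists_nat_one_div_lt (show (0:ℝ) < min (r - l') (u - r) by
    simp only [lt_min_iff]; exact ⟨by simpa [sub_pos] using hl'r, by simpa [sub_pos] using hur⟩)
  refine ⟨n, fun q q' hq hq' => ?_⟩
  have h1n : (1:ℝ) / (n + 1) < r - l' := lt_of_lt_of_le hn (min_le_left _ _)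
  have h2n : (1:ℝ) / (n + 1) < u - r := lt_of_lt_of_le hn (min_le_right _ _)
  have hqmem : (q:ℝ) ∈ Set.Ioo l' r := ⟨by linarith [hq.2], hq.1⟩
  have hq'mem : (q':ℝ) ∈ Set.Ico r u := ⟨le_of_lt hq'.1, by linarith [hq'.2]⟩
  have d1 : dist (x q) (x r) < ε := hsubl hqmem
  have d2 : dist (x q') (x r) < ε := hsubr hq'mem
  have := abs_sub_le (x (q:ℝ)) (x r) (x (q':ℝ))
  rw [Real.dist_eq] at d1 d2
  have : |x (q:ℝ) - x (q':ℝ)| ≤ |x (q:ℝ) - x r| + |x r - x (q':ℝ)| := this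
  rw [abs_sub_comm (x r) (x (q':ℝ))] at this
  have hεε : ε + ε = 1 / (k+1) := by rw [hε]; ring
  linarith

lemma eq_of_psiP {x : ℝ → ℝ} {r l : ℝ}
    (h1 : Tendsto x (𝓝[<] r) (𝓝 l))
    (h2 : ContinuousWithinAt x (Set.Ici r) r)
    (hψ : psiP (fun q : ℚ => x q) r) : l = x r := by
  by_contra hne
  have hd0 : 0 < |l - x r| := abs_pos.mpr (sub_ne_zero.mpr hne)
  obtain ⟨k, hk⟩ := exists_nat_one_div_lt hd0
  obtain ⟨n, hn⟩ := hψ k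
  set δ : ℝ := (|l - x r| - 1 / (k + 1)) / 2 with hδ
  have hδ0 : 0 < δ := by rw [hδ]; linarith
  have hl : ∀ᶠ v in 𝓝[<] r, dist (x v) l < δ := Metric.tendsto_nhds.mp h1 δ hδ0
  have hr : ∀ᶠ v in 𝓝[≥] r, dist (x v) (x r) < δ := Metric.tendsto_nhds.mp h2 δ hδ0
  rw [eventually_iff, mem_nhdsLT_iff_exists_Ioo_subset] at hl
  rw [eventually_iff, mem_nhdsGE_iff_exists_Ico_subset] at hr
  obtain ⟨l', hl'r, hsubl⟩ := hl
  obtain ⟨u, hur, hsubr⟩ := hr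
  have h1n : (0:ℝ) < 1 / (n + 1) := by positivity
  obtain ⟨q, hq1, hq2⟩ := exists_rat_btwn (show max l' (r - 1 / (n+1)) < r by
    simp only [max_lt_iff]; exact ⟨hl'r, by linarith⟩)
  obtain ⟨q', hq'1, hq'2⟩ := exists_rat_btwn (show r < min u (r + 1 / (n+1)) by
    simp only [lt_min_iff]; exact ⟨hur, by linarith⟩)
  have hb := hn q q' ⟨hq2, lt_of_le_of_lt (le_max_right _ _) hq1⟩
    ⟨hq'1, lt_of_lt_of_le hq'2 (min_le_right _ _)⟩
  have d1 : |x (q:ℝ) - l| < δ := by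
    simpa [Real.dist_eq] using hsubl ⟨lt_of_le_of_lt (le_max_left _ _) hq1, hq2⟩
  have d2 : |x (q':ℝ) - x r| < δ := by
    simpa [Real.dist_eq] using hsubr ⟨le_of_lt hq'1, lt_of_lt_of_le hq'2 (min_le_left _ _)⟩
  have t1 : |l - x r| ≤ |l - x (q:ℝ)| + |x (q:ℝ) - x r| := abs_sub_le _ _ _
  have t2 : |x (q:ℝ) - x r| ≤ |x (q:ℝ) - x (q':ℝ)| + |x (q':ℝ) - x r| := abs_sub_le _ _ _
  rw [abs_sub_comm l (x (q:ℝ))] at t1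
  linarith

lemma measurableSet_psiP : MeasurableSet {p : (ℚ → ℝ) × ℝ | psiP p.1 p.2} := by
  have : {p : (ℚ → ℝ) × ℝ | psiP p.1 p.2} =
      ⋂ k : ℕ, ⋃ n : ℕ, ⋂ q : ℚ, ⋂ q' : ℚ,
        ({p : (ℚ → ℝ) × ℝ | (q : ℝ) < p.2 ∧ p.2 - 1 / (n + 1) < (q : ℝ)}ᶜ ∪
          ({p : (ℚ → ℝ) × ℝ | p.2 < (q' : ℝ) ∧ (q' : ℝ) < p.2 + 1 / (n + 1)}ᶜ ∪
           {p : (ℚ → ℝ) × ℝ | |p.1 q - p.1 q'| ≤ 1 / (k + 1)})) := by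
    ext p
    simp only [psiP, Set.mem_setOf_eq, Set.mem_iInter, Set.mem_iUnion, Set.mem_union,
      Set.mem_compl_iff, Set.mem_setOf_eq]
    constructor
    · intro h k
      obtain ⟨n, hn⟩ := h k
      refine ⟨n, fun q q' => ?_⟩
      have := hn q q'
      tauto
    · intro h k
      obtain ⟨n, hn⟩ := h k
      exact ⟨n, fun q q' h1 h2 => by have := hn q q'; tauto⟩
  rw [this]
  refine MeasurableSet.iInter fun k => MeasurableSet.iUnion fun n =>
    MeasurableSet.iInter fun q => MeasurableSet.iInter fun q' => ?_
  refine MeasurableSet.union ?_ (MeasurableSet.union ?_ ?_)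
  · exact ((measurableSet_lt measurable_const measurable_snd).inter
      (measurableSet_lt (measurable_snd.sub measurable_const) measurable_const)).compl
  · exact ((measurableSet_lt measurable_snd measurable_const).inter
      (measurableSet_lt measurable_const (measurable_snd.add measurable_const))).compl
  · exact measurableSet_le
      (((measurable_pi_apply q).comp measurable_fst).sub
        ((measurable_pi_apply q').comp measurable_fst)).abs measurable_const

end Aux
section Aux2

open MeasureTheory ProbabilityTheory Filter Set
open scoped ENNReal NNReal Topology

variable {Ω : Type*} [MeasurableSpace Ω] {P : MeasureTheory.Measure Ω}

/-- Stochastic continuity: a Lévy process is a.s. left-continuous (along rationals)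
at any fixed time `r > 0`. -/
lemma ae_psiP [IsProbabilityMeasure P] {X : ℝ → Ω → ℝ} (hX : IsLevyProcess P X)
    {r : ℝ} (hr : 0 < r) :
    ∀ᵐ ω ∂P, psiP (fun q : ℚ => X (q : ℝ) ω) r := by
  classical
  set s : ℕ → ℝ := fun m => r - r / (m + 2) with hs
  set u : ℕ → ℝ := fun m => r / (m + 2) with hu
  have hu0 : ∀ m, 0 < u m := fun m => by rw [hu]; positivity
  have hsu : ∀ m, s m + u m = r := fun m => by rw [hs, hu]; ring
  have hs0 : ∀ m, 0 < s m := by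
    intro m
    rw [hs]
    simp only [sub_pos]
    rw [div_lt_iff₀ (by positivity)]
    nlinarith [hr, (Nat.cast_nonneg m : (0:ℝ) ≤ m)]
  have hsr : ∀ m, s m < r := fun m => by
    rw [hs]; linarith [hu0 m]
  have hulim : Tendsto u atTop (𝓝 0) := by
    rw [hu]
    exact Tendsto.div_atTop tendsto_const_nhds
      (tendsto_atTop_add_const_right _ 2 tendsto_natCast_atTop_atTop)
  have hslim : Tendsto s atTop (𝓝 r) := by
    have : Tendsto (fun m => r - u m) atTop (𝓝 (r - 0)) := tendsto_const_nhds.sub hulim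
    simpa [hs, hu] using this
  -- convergence in measure of X (u m) to 0
  have haetend : ∀ᵐ ω ∂P, Tendsto (fun m => X (u m) ω) atTop (𝓝 0) := by
    filter_upwards [hX.right_cont, hX.init] with ω hrc h0
    have h1 : Tendsto (fun v => X v ω) (𝓝[≥] (0:ℝ)) (𝓝 (X 0 ω)) := hrc 0 le_rfl
    have h2 : Tendsto u atTop (𝓝[≥] (0:ℝ)) := by
      refine tendsto_nhdsWithin_of_tendsto_nhds_of_eventually_within _ hulim ?_
      exact Eventually.of_forall fun m => (hu0 m).le
    simpa [h0, Function.comp_def] using h1.comp h2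
  have htm : TendstoInMeasure P (fun m ω => X (u m) ω) atTop (fun _ => (0:ℝ)) :=
    tendstoInMeasure_of_tendsto_ae (fun m => (hX.measurable _).aestronglyMeasurable) haetend
  -- events
  set A : ℕ → ℕ → Set Ω := fun k m => {ω | 1 / (k + 1 : ℝ) < |X r ω - X (s m) ω|} with hA
  have hAmeas : ∀ k m, MeasurableSet (A k m) :=
    fun k m => measurableSet_lt measurable_const ((hX.measurable r).sub (hX.measurable (s m))).abs
  -- measure of A k m via stationarity
  have hPA : ∀ k m, P (A k m) ≤ P {ω | 1 / (k + 1 : ℝ) ≤ dist (X (u m) ω) 0} := by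
    intro k m
    have hmap := hX.stat_increments (u m) (s m) (hu0 m).le (hs0 m).le
    rw [hsu m] at hmap
    have hCmeas : MeasurableSet {y : ℝ | 1 / (k + 1 : ℝ) < |y|} :=
      measurableSet_lt measurable_const measurable_abs
    have e1 : P (A k m) = P.map (fun ω => X r ω - X (s m) ω) {y : ℝ | 1 / (k + 1 : ℝ) < |y|} := by
      rw [Measure.map_apply (f := fun ω => X r ω - X (s m) ω) ((hX.measurable r).sub (hX.measurable (s m))) hCmeas]
      rfl
    have e2 : P.map (X (u m)) {y : ℝ | 1 / (k + 1 : ℝ) < |y|}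
        = P {ω | 1 / (k + 1 : ℝ) < |X (u m) ω|} := by
      rw [Measure.map_apply (hX.measurable (u m)) hCmeas]
      rfl
    rw [e1, hmap, e2]
    refine measure_mono fun ω hω => ?_
    simp only [Set.mem_setOf_eq, Real.dist_0_eq_abs] at *
    exact hω.le
  -- each tail intersection is null
  have htail : ∀ k N, P (⋂ j : ℕ, A k (N + j)) = 0 := by
    intro k N
    have hk1 : (0:ℝ) < 1 / (k + 1) := by positivity
    have hlim := tendstoInMeasure_iff_dist.mp htm (1 / (k + 1 : ℝ)) hk1
    have hle : ∀ j : ℕ, P (⋂ j : ℕ, A k (N + j)) ≤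
        P {ω | 1 / (k + 1 : ℝ) ≤ dist (X (u (N + j)) ω) 0} := by
      intro j
      exact le_trans (measure_mono (Set.iInter_subset _ j)) (hPA k (N + j))
    have hlim2 : Tendsto (fun j : ℕ => P {ω | 1 / (k + 1 : ℝ) ≤ dist (X (u (N + j)) ω) 0})
        atTop (𝓝 0) := hlim.comp ((tendsto_add_atTop_nat N).congr fun a => Nat.add_comm a N)
    have := ge_of_tendsto hlim2 (Eventually.of_forall hle)
    exact le_antisymm this (by positivity)
  -- assemble
  rw [ae_iff]
  refine measure_mono_null ?_ (measure_union_null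
    (measure_iUnion_null fun k => measure_iUnion_null fun N => htail k N)
    (by
      have h1 := hX.right_cont
      have h2 := hX.left_lim
      rw [ae_iff] at h1 h2
      exact measure_union_null h1 h2))
  intro ω hω
  simp only [Set.mem_setOf_eq] at hω
  by_cases hgood : (∀ t : ℝ, 0 ≤ t → ContinuousWithinAt (fun v => X v ω) (Set.Ici t) t) ∧
      (∀ t : ℝ, 0 < t → ∃ l : ℝ, Tendsto (fun v => X v ω) (𝓝[<] t) (𝓝 l))
  · left
    obtain ⟨hrc, hll⟩ := hgood
    obtain ⟨l, hl⟩ := hll r hr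
    have hne : l ≠ X r ω := by
      intro he
      exact hω (psiP_of_tendsto (he ▸ hl) (hrc r hr.le))
    have hd0 : 0 < |X r ω - l| := abs_pos.mpr (sub_ne_zero.mpr fun he => hne he.symm)
    obtain ⟨k, hk⟩ := exists_nat_one_div_lt hd0
    have hconv : Tendsto (fun m => X (s m) ω) atTop (𝓝 l) := by
      refine hl.comp ?_
      refine tendsto_nhdsWithin_of_tendsto_nhds_of_eventually_within _ hslim ?_
      exact Eventually.of_forall fun m => hsr m
    have hev : ∀ᶠ m in atTop, ω ∈ A k m := by
      have : ∀ᶠ m in atTop, dist (X (s m) ω) l < |X r ω - l| - 1 / (k + 1) :=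
        Metric.tendsto_nhds.mp hconv _ (by linarith)
      filter_upwards [this] with m hm
      rw [Real.dist_eq] at hm
      have t1 : |X r ω - l| ≤ |X r ω - X (s m) ω| + |X (s m) ω - l| := abs_sub_le _ _ _
      simp only [hA, Set.mem_setOf_eq]
      linarith
    obtain ⟨N, hN⟩ := eventually_atTop.mp hev
    refine Set.mem_iUnion.mpr ⟨k, Set.mem_iUnion.mpr ⟨N, Set.mem_iInter.mpr fun j => ?_⟩⟩
    exact hN (N + j) (Nat.le_add_right _ _)
  · right
    rw [not_and_or] at hgood
    rcases hgood with h | h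
    · left; simpa using h
    · right; simpa using h

end Aux2
section Aux3

open MeasureTheory ProbabilityTheory Filter Set
open scoped ENNReal NNReal Topology

/-- A measurable version of the right-continuous inverse, evaluated at a rational level `q`,
as a function of the path. -/
noncomputable def rhoF (q : ℚ) (s : ℝ → ℝ) : ℝ :=
  (⨅ u : ℚ, if 0 < (u : ℝ) ∧ (q : ℝ) < s u then ENNReal.ofReal (u : ℝ) else ⊤).toReal

lemma measurable_rhoF (q : ℚ) : Measurable (rhoF q) := by
  apply ENNReal.measurable_toReal.comp
  refine Measurable.iInf fun u => ?_
  refine Measurable.ite ?_ measurable_const measurable_const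
  exact (MeasurableSet.const _).inter (measurableSet_lt measurable_const (measurable_pi_apply _))

lemma rhoF_eq_of_gap {s : ℝ → ℝ} {r c : ℝ} {q : ℚ} (hr : 0 < r)
    (hmono : MonotoneOn s (Set.Ici 0)) (hc : ∀ u ∈ Set.Ico (0:ℝ) r, s u ≤ c)
    (hcq : c < (q : ℝ)) (hqr : (q : ℝ) < s r) : rhoF q s = r := by
  have hiff : ∀ u : ℚ, (0 < (u : ℝ) ∧ (q : ℝ) < s u) ↔ r ≤ (u : ℝ) := by
    intro u
    constructor
    · rintro ⟨h0, hq⟩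
      by_contra hur
      push_neg at hur
      exact absurd (hq.trans_le (hc u ⟨h0.le, hur⟩)) (not_lt.mpr hcq.le)
    · intro hru
      exact ⟨lt_of_lt_of_le hr hru,
        lt_of_lt_of_le hqr (hmono hr.le (hr.le.trans hru) hru)⟩
  have hinf : (⨅ u : ℚ, if 0 < (u : ℝ) ∧ (q : ℝ) < s u then ENNReal.ofReal (u : ℝ) else ⊤)
      = ENNReal.ofReal r := by
    apply le_antisymm
    · refine ENNReal.le_of_forall_pos_le_add fun ε hε _ => ?_
      obtain ⟨u, hu1, hu2⟩ := exists_rat_btwn (show r < r + (ε : ℝ) by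
        have : (0:ℝ) < ε := hε
        linarith)
      calc (⨅ u : ℚ, if 0 < (u : ℝ) ∧ (q : ℝ) < s u then ENNReal.ofReal (u : ℝ) else ⊤)
          ≤ ENNReal.ofReal (u : ℝ) := by
            refine le_trans (iInf_le _ u) ?_
            rw [if_pos ((hiff u).mpr hu1.le)]
        _ ≤ ENNReal.ofReal (r + (ε:ℝ)) := ENNReal.ofReal_le_ofReal hu2.le
        _ = ENNReal.ofReal r + ε := by
            rw [ENNReal.ofReal_add hr.le (by positivity), ENNReal.ofReal_coe_nnreal]
    · refine le_iInf fun u => ?_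
      by_cases h : 0 < (u : ℝ) ∧ (q : ℝ) < s u
      · rw [if_pos h]
        exact ENNReal.ofReal_le_ofReal ((hiff u).mp h)
      · rw [if_neg h]; exact le_top
  rw [rhoF, hinf, ENNReal.toReal_ofReal hr.le]

variable {Ω : Type*} [MeasurableSpace Ω] {P : MeasureTheory.Measure Ω}

/-- The key independence consequence: a.s. the time-changed inverse `rhoF q` of `S`, whenever
positive, is a point where `X` satisfies the rational left-right oscillation criterion `psiP`. -/
lemma ae_not_bad [IsProbabilityMeasure P] {X S : ℝ → Ω → ℝ}
    (hX : IsLevyProcess P X) (hSm : ∀ t, Measurable (S t))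
    (hindep : IndepFun (fun ω => fun t => S t ω) (fun ω => fun t => X t ω) P) (q : ℚ) :
    ∀ᵐ ω ∂P, ¬ (0 < rhoF q (fun t => S t ω) ∧
      ¬ psiP (fun u : ℚ => X (u : ℝ) ω) (rhoF q (fun t => S t ω))) := by
  classical
  set ρ : Ω → ℝ := fun ω => rhoF q (fun t => S t ω) with hρ
  set XQ : Ω → ℚ → ℝ := fun ω u => X (u : ℝ) ω with hXQ
  have hSp : Measurable (fun ω => fun t => S t ω) := measurable_pi_lambda _ hSm
  have hXp : Measurable (fun ω => fun t => X t ω) := measurable_pi_lambda _ hX.measurable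
  have hρm : Measurable ρ := (measurable_rhoF q).comp hSp
  have hXQm : Measurable XQ := measurable_pi_lambda _ (fun u => hX.measurable _)
  have hind2 : IndepFun ρ XQ P := by
    have h1 : Measurable (fun x : ℝ → ℝ => fun u : ℚ => x (u : ℝ)) :=
      measurable_pi_lambda _ (fun u => measurable_pi_apply _)
    exact hindep.comp (measurable_rhoF q) h1
  set E : Set (ℝ × (ℚ → ℝ)) := {p | 0 < p.1 ∧ ¬ psiP p.2 p.1} with hE
  have hEmeas : MeasurableSet E := by
    have h1 : MeasurableSet {p : ℝ × (ℚ → ℝ) | 0 < p.1} :=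
      measurableSet_lt measurable_const measurable_fst
    have h2 : MeasurableSet {p : ℝ × (ℚ → ℝ) | psiP p.2 p.1} :=
      measurable_swap measurableSet_psiP
    have hEeq : E = {p : ℝ × (ℚ → ℝ) | 0 < p.1} ∩ {p : ℝ × (ℚ → ℝ) | psiP p.2 p.1}ᶜ := by
      ext p; simp [hE, Set.mem_inter_iff]
    rw [hEeq]
    exact h1.inter h2.compl
  haveI : IsProbabilityMeasure (P.map ρ) := Measure.isProbabilityMeasure_map hρm.aemeasurable
  haveI : IsProbabilityMeasure (P.map XQ) := Measure.isProbabilityMeasure_map hXQm.aemeasurable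
  have hprod : P.map (fun ω => (ρ ω, XQ ω)) = (P.map ρ).prod (P.map XQ) :=
    (indepFun_iff_map_prod_eq_prod_map_map hρm.aemeasurable hXQm.aemeasurable).mp hind2
  have hnull : P ((fun ω => (ρ ω, XQ ω)) ⁻¹' E) = 0 := by
    rw [← Measure.map_apply (hρm.prodMk hXQm) hEmeas, hprod, Measure.prod_apply hEmeas]
    have hsec : ∀ r : ℝ, (P.map XQ) (Prod.mk r ⁻¹' E) = 0 := by
      intro r
      by_cases hr : 0 < r
      · have hsec' : Prod.mk r ⁻¹' E = {x : ℚ → ℝ | ¬ psiP x r} := by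
          ext x; simp [hE, hr]
        have hcompl : {x : ℚ → ℝ | ¬ psiP x r} = {x : ℚ → ℝ | psiP x r}ᶜ := rfl
        rw [hsec', hcompl]
        have hms : MeasurableSet {x : ℚ → ℝ | psiP x r} := by
          have : {x : ℚ → ℝ | psiP x r} =
              (fun x : ℚ → ℝ => (x, r)) ⁻¹' {p : (ℚ → ℝ) × ℝ | psiP p.1 p.2} := rfl
          rw [this]
          exact (measurable_id.prodMk measurable_const) measurableSet_psiP
        rw [Measure.map_apply hXQm hms.compl]
        have := ae_psiP hX hr
        rw [ae_iff] at this
        exact this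
      · have hsec' : Prod.mk r ⁻¹' E = ∅ := by
          ext x; simp [hE, hr]
        rw [hsec']; simp
    simp only [hsec]
    simp
  rw [ae_iff]
  convert hnull using 2
  ext ω
  simp [hE, hρ, hXQ]

end Aux3
section Aux4

open MeasureTheory ProbabilityTheory Filter Set
open scoped ENNReal NNReal Topology

lemma pathwise {Ω : Type*} (X S H : ℝ → Ω → ℝ) (ω : Ω) {a : ℝ} (ha : 0 ≤ a)
    (hx0 : X 0 ω = 0) (hs0 : S 0 ω = 0)
    (hsm : StrictMonoOn (fun t => S t ω) (Set.Ici 0))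
    (hsrc : ∀ t : ℝ, 0 ≤ t → ContinuousWithinAt (fun v => S v ω) (Set.Ici t) t)
    (hh0 : H 0 ω = 0) (hhm : MonotoneOn (fun t => H t ω) (Set.Ici 0))
    (hK : ∀ r : ℝ, 0 < r → (∃ c, (∀ u ∈ Set.Ico (0:ℝ) r, S u ω ≤ c) ∧ c < S r ω) →
      Tendsto (fun v => X v ω) (𝓝[<] r) (𝓝 (X r ω))) :
    sInf (ENNReal.ofReal '' {t : ℝ | 0 < t ∧ a < X (invS S t ω) ω - H (S (invS S t ω) ω) ω}) =
      (if sInf (ENNReal.ofReal '' {t : ℝ | 0 < t ∧ a < X t ω - H (S t ω) ω}) < ⊤ then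
        ENNReal.ofReal
          (S (sInf (ENNReal.ofReal '' {t : ℝ | 0 < t ∧ a < X t ω - H (S t ω) ω})).toReal ω)
      else ⊤) := by
  classical
  set T : Set ℝ := {t : ℝ | 0 < t ∧ a < X t ω - H (S t ω) ω} with hT
  set L : Set ℝ := {t : ℝ | 0 < t ∧ a < X (invS S t ω) ω - H (S (invS S t ω) ω) ω} with hL
  set τ : ℝ≥0∞ := sInf (ENNReal.ofReal '' T) with hτdef
  have hmono : MonotoneOn (fun t => S t ω) (Set.Ici 0) := hsm.monotoneOn
  have hSnonneg : ∀ v : ℝ, 0 ≤ v → 0 ≤ S v ω := by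
    intro v hv
    calc (0:ℝ) = S 0 ω := hs0.symm
      _ ≤ S v ω := hmono (Set.mem_Ici.mpr le_rfl) (Set.mem_Ici.mpr hv) hv
  have hlnn : ∀ t : ℝ, 0 ≤ invS S t ω :=
    fun t => Real.sInf_nonneg fun v hv => le_of_lt hv.1
  have hlpos : ∀ t : ℝ, 0 < t →
      a < X (invS S t ω) ω - H (S (invS S t ω) ω) ω → 0 < invS S t ω := by
    intro t ht hfa
    rcases (hlnn t).lt_or_eq with h | h
    · exact h
    · rw [← h] at hfa
      rw [hx0, hs0, hh0] at hfa
      linarith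
  have hbelow : ∀ t v : ℝ, 0 < v → v < invS S t ω → S v ω ≤ t := by
    intro t v hv hvl
    by_contra hc
    push_neg at hc
    have : invS S t ω ≤ v := csInf_le ⟨0, fun z hz => hz.1.le⟩ ⟨hv, hc⟩
    linarith
  have hmemT : ∀ t ∈ L, invS S t ω ∈ T := fun t ht => ⟨hlpos t ht.1 ht.2, ht.2⟩
  have hτle : ∀ t ∈ L, τ ≤ ENNReal.ofReal (invS S t ω) :=
    fun t ht => sInf_le (Set.mem_image_of_mem _ (hmemT t ht))
  have hlSu : ∀ u : ℝ, 0 < u → invS S (S u ω) ω = u := by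
    intro u hu
    have hset : {v : ℝ | 0 < v ∧ S u ω < S v ω} = Set.Ioi u := by
      ext v
      constructor
      · rintro ⟨hv0, hlt⟩
        rw [Set.mem_Ioi]
        by_contra hvu
        push_neg at hvu
        have : S v ω ≤ S u ω := hmono (Set.mem_Ici.mpr hv0.le) (Set.mem_Ici.mpr hu.le) hvu
        exact absurd hlt (not_lt.mpr this)
      · intro hv
        rw [Set.mem_Ioi] at hv
        exact ⟨hu.trans hv, hsm (Set.mem_Ici.mpr hu.le)
          (Set.mem_Ici.mpr (hu.trans hv).le) hv⟩
    show sInf {v : ℝ | 0 < v ∧ S u ω < S v ω} = u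
    rw [hset]
    exact csInf_Ioi
  by_cases hfin : τ < ⊤
  · rw [if_pos hfin]
    set τr : ℝ := τ.toReal with hτr
    have hτr0 : 0 ≤ τr := ENNReal.toReal_nonneg
    have hofτ : ENNReal.ofReal τr = τ := ENNReal.ofReal_toReal hfin.ne
    apply le_antisymm
    · -- upper bound via right-continuity of S at τr
      refine ENNReal.le_of_forall_pos_le_add fun ε hε _ => ?_
      have hcw := hsrc τr hτr0
      have hev : {v : ℝ | S v ω < S τr ω + (ε:ℝ)} ∈ 𝓝[≥] τr := by
        refine hcw (isOpen_Iio.mem_nhds ?_)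
        have : (0:ℝ) < ε := hε
        simp only [Set.mem_Iio]
        linarith
      rw [mem_nhdsGE_iff_exists_Ico_subset] at hev
      obtain ⟨u', hu'1, hsub⟩ := hev
      rw [Set.mem_Ioi] at hu'1
      have hu'0 : 0 < u' := lt_of_le_of_lt hτr0 hu'1
      have hlt : τ < ENNReal.ofReal u' := by
        rw [← hofτ]
        exact (ENNReal.ofReal_lt_ofReal_iff hu'0).mpr hu'1
      obtain ⟨b, hbmem, hblt⟩ := sInf_lt_iff.mp hlt
      obtain ⟨u, huT, rfl⟩ := hbmem
      have hu0 : 0 < u := huT.1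
      have huu' : u < u' := by
        by_contra hc
        push_neg at hc
        exact absurd hblt (not_lt.mpr (ENNReal.ofReal_le_ofReal hc))
      have hτru : τr ≤ u := by
        have h1 : τ ≤ ENNReal.ofReal u := sInf_le (Set.mem_image_of_mem _ huT)
        rw [← hofτ] at h1
        exact (ENNReal.ofReal_le_ofReal_iff hu0.le).mp h1
      have hSu : S u ω < S τr ω + (ε:ℝ) := hsub ⟨hτru, huu'⟩
      have hmemL : S u ω ∈ L := by
        refine ⟨?_, ?_⟩
        · calc (0:ℝ) = S 0 ω := hs0.symm
            _ < S u ω := hsm (Set.mem_Ici.mpr le_rfl) (Set.mem_Ici.mpr hu0.le) hu0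
        · show a < X (invS S (S u ω) ω) ω - H (S (invS S (S u ω) ω) ω) ω
          rw [hlSu u hu0]
          exact huT.2
      calc sInf (ENNReal.ofReal '' L) ≤ ENNReal.ofReal (S u ω) :=
            sInf_le (Set.mem_image_of_mem _ hmemL)
        _ ≤ ENNReal.ofReal (S τr ω + (ε:ℝ)) := ENNReal.ofReal_le_ofReal hSu.le
        _ ≤ ENNReal.ofReal (S τr ω) + ENNReal.ofReal (ε:ℝ) := ENNReal.ofReal_add_le
        _ = ENNReal.ofReal (S τr ω) + ε := by rw [ENNReal.ofReal_coe_nnreal]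
    · -- lower bound
      refine le_sInf ?_
      rintro b ⟨t, htL, rfl⟩
      refine ENNReal.ofReal_le_ofReal ?_
      have hℓT : invS S t ω ∈ T := hmemT t htL
      have hτrℓ : τr ≤ invS S t ω := by
        have h1 := hτle t htL
        rw [← hofτ] at h1
        exact (ENNReal.ofReal_le_ofReal_iff (hlnn t)).mp h1
      rcases eq_or_lt_of_le hτrℓ with heq | hltℓ
      · -- τr = invS S t ω : use no-common-jump hypothesis
        by_contra hst
        push_neg at hst
        have hτrpos : 0 < τr := by
          rw [heq]
          exact hlpos t htL.1 htL.2
        have hgap : ∃ c, (∀ u ∈ Set.Ico (0:ℝ) τr, S u ω ≤ c) ∧ c < S τr ω := by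
          refine ⟨t, fun u hu => ?_, hst⟩
          rcases eq_or_lt_of_le hu.1 with h0 | h0
          · rw [← h0, hs0]
            exact htL.1.le
          · exact hbelow t u h0 (by rw [← heq]; exact hu.2)
        have hxl := hK τr hτrpos hgap
        have hub : ∀ᶠ v in 𝓝[<] τr, X v ω ≤ a + H (S τr ω) ω := by
          have hIoo : Set.Ioo (0:ℝ) τr ∈ 𝓝[<] τr := by
            rw [mem_nhdsLT_iff_exists_Ioo_subset]
            exact ⟨0, hτrpos, subset_rfl⟩
          filter_upwards [hIoo] with v hv
          have hvT : v ∉ T := by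
            intro hvT
            have h1 : τ ≤ ENNReal.ofReal v := sInf_le (Set.mem_image_of_mem _ hvT)
            have h2 : ENNReal.ofReal v < τ := by
              rw [← hofτ]
              exact (ENNReal.ofReal_lt_ofReal_iff hτrpos).mpr hv.2
            exact absurd h1 (not_le.mpr h2)
          have hxv : X v ω - H (S v ω) ω ≤ a := by
            by_contra hc
            push_neg at hc
            exact hvT ⟨hv.1, hc⟩
          have hHle : H (S v ω) ω ≤ H (S τr ω) ω :=
            hhm (Set.mem_Ici.mpr (hSnonneg v hv.1.le)) (Set.mem_Ici.mpr (hSnonneg τr hτr0))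
              (hmono (Set.mem_Ici.mpr hv.1.le) (Set.mem_Ici.mpr hτr0) hv.2.le)
          linarith
        have hXτr : X τr ω ≤ a + H (S τr ω) ω := le_of_tendsto hxl hub
        have hfa : a < X τr ω - H (S τr ω) ω := by
          rw [heq]
          exact htL.2
        linarith
      · -- τr < invS S t ω
        set v : ℝ := (τr + invS S t ω) / 2 with hv
        have hv1 : τr < v := by rw [hv]; linarith
        have hv2 : v < invS S t ω := by rw [hv]; linarith
        have hv0 : 0 < v := lt_of_le_of_lt hτr0 hv1
        have h1 : S v ω ≤ t := hbelow t v hv0 hv2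
        have h2 : S τr ω < S v ω :=
          hsm (Set.mem_Ici.mpr hτr0) (Set.mem_Ici.mpr hv0.le) hv1
        linarith
  · rw [if_neg hfin]
    have hτtop : τ = ⊤ := top_le_iff.mp (not_lt.mp hfin)
    have hLempty : L = ∅ := by
      ext t
      simp only [Set.mem_empty_iff_false, iff_false]
      intro htL
      have h1 := hτle t htL
      rw [hτtop] at h1
      exact ENNReal.ofReal_ne_top (top_le_iff.mp h1)
    rw [hLempty]
    simp

end Aux4

/-- the first passage time of `t ↦ X_{ℓ_t} - H_{S_{ℓ_t}}` above `a` equals a.s.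
`S_{τ_a}` where `τ_a` is the first passage time of the Lévy process `t ↦ X_t - H_{S_t}`. -/
theorem statement_5 {Ω : Type*} [MeasurableSpace Ω] (P : MeasureTheory.Measure Ω)
    [MeasureTheory.IsProbabilityMeasure P] (X S H : ℝ → Ω → ℝ)
    (hX : IsLevyProcess P X) (hS : IsStrictSubordinator P S) (hH : IsSubordinator P H)
    (hindep : IndepProc3 P X S H) :
    ∀ a : ℝ, 0 ≤ a → ∀ᵐ ω ∂P,
      passageTime (fun ω t => a < subX X S t ω - H (S (invS S t ω) ω) ω) ω =
        (if passageTime (fun ω t => a < X t ω - H (S t ω) ω) ω < ⊤ then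
          ENNReal.ofReal
            (S (passageTime (fun ω t => a < X t ω - H (S t ω) ω) ω).toReal ω)
        else ⊤) := by
  intro a ha
  have hSX : IndepFun (fun ω => fun t => S t ω) (fun ω => fun t => X t ω) P := by
    have h := hindep.indepFun (i := 1) (j := 0) (by decide)
    simpa using h
  have hbad : ∀ᵐ ω ∂P, ∀ q : ℚ, ¬ (0 < rhoF q (fun t => S t ω) ∧
      ¬ psiP (fun u : ℚ => X (u : ℝ) ω) (rhoF q (fun t => S t ω))) :=
    ae_all_iff.mpr fun q => ae_not_bad hX hS.1.measurable hSX q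
  filter_upwards [hX.init, hS.1.init, hS.2, hS.1.right_cont, hH.1.init, hH.2,
    hX.left_lim, hX.right_cont, hbad] with ω hx0 hs0 hsm hsrc hh0 hhm hll hrc hb
  have hK : ∀ r : ℝ, 0 < r → (∃ c, (∀ u ∈ Set.Ico (0:ℝ) r, S u ω ≤ c) ∧ c < S r ω) →
      Filter.Tendsto (fun v => X v ω) (nhdsWithin r (Set.Iio r)) (nhds (X r ω)) := by
    rintro r hr ⟨c, hc, hcr⟩
    obtain ⟨l, hl⟩ := hll r hr
    obtain ⟨q, hq1, hq2⟩ := exists_rat_btwn hcr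
    have hρ : rhoF q (fun t => S t ω) = r := rhoF_eq_of_gap hr hsm.monotoneOn hc hq1 hq2
    have hψ : psiP (fun u : ℚ => X (u : ℝ) ω) r := by
      have h := hb q
      rw [hρ] at h
      by_contra hn
      exact h ⟨hr, hn⟩
    have heq := eq_of_psiP hl (hrc r hr.le) hψ
    exact heq ▸ hl
  simp only [passageTime, subX]
  exact pathwise X S H ω ha hx0 hs0 hsm hsrc hh0 hhm hK
end
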